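/- Let H be a reduced double-well type potential, β > 0, and let μ_β be the Gibbs measure at inverse temperature β. Then: (1) μ_β([01]) = μ_β([10]); (2) μ_β([0^n 1]) / μ_β([01]) = ( Σ_{k≥n} λ_β^{−k} e^{−β H_k^1} ) F_β^0(λ_β) and μ_β([0]) / μ_β([01]) = F̃_β^1(λ_β) / F_β^1(λ_β); (3) μ_β([1^n 0]) / μ_β([10]) = ( Σ_{k≥n} λ_β^{−k} e^{−β H_k^0} ) F_β^1(λ_β) and μ_β([1]) / μ_β([10]) = F̃_β^0(λ_β) / F_β^0(λ_β); (4) μ_β([0 1^n 0]) / μ_β([10]) = e^{−β H_n^0} F_β^1(λ_β) λ_β^{−n} and μ_β([1 0^n 1]) / μ_β([01]) = e^{−β H_n^1} F_β^0(λ_β) λ_β^{−n}; (5) μ_β([0]) / μ_β([1]) = ( F_β^0(λ_β) / F_β^1(λ_β) ) · ( F̃_β^1(λ_β) / F̃_β^0(λ_β) ). -/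

import Mathlib

open MeasureTheory Filter Topology

/-- The one-sided full shift space on two symbols. -/
abbrev Sig : Type := ℕ → Fin 2

/-- The left shift map. -/
def shft : Sig → Sig := fun x n => x (n + 1)

/-- Concatenation of a symbol with a configuration. -/
def cons2 (i : Fin 2) (x : Sig) : Sig := fun n => match n with
  | 0 => i
  | Nat.succ k => x k

/-- `x` and `y` agree on their first `n` coordinates. -/
def nClose (n : ℕ) (x y : Sig) : Prop := ∀ k, k < n → x k = y k

/-- The `n`-th variation of `H`. -/
noncomputable def Var (H : Sig → ℝ) (n : ℕ) : ℝ :=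
  sSup {d : ℝ | ∃ x y : Sig, nClose n x y ∧ d = |H x - H y|}

/-- `H` has summable variation. -/
def SummableVar (H : Sig → ℝ) : Prop := Summable (fun n : ℕ => Var H (n + 1))

/-- The transfer operator at inverse temperature `β`. -/
noncomputable def transfer (β : ℝ) (H : Sig → ℝ) (Φ : Sig → ℝ) : Sig → ℝ :=
  fun x => Real.exp (-β * H (cons2 0 x)) * Φ (cons2 0 x)
         + Real.exp (-β * H (cons2 1 x)) * Φ (cons2 1 x)

/-- The cylinder set determined by a finite word. -/
def cyl (w : List (Fin 2)) : Set Sig := {x | ∀ i : ℕ, ∀ h : i < w.length, x i = w.get ⟨i, h⟩}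

/-- The fixed point `0^∞`. -/
def zpt : Sig := fun _ => 0

/-- The fixed point `1^∞`. -/
def opt : Sig := fun _ => 1

/-- The minimizing ergodic value of `H`. -/
noncomputable def Hbar (H : Sig → ℝ) : ℝ :=
  sInf {r : ℝ | ∃ μ : Measure Sig, IsProbabilityMeasure μ ∧ μ.map shft = μ ∧ r = ∫ x, H x ∂μ}

/-- A minimizing measure for `H`. -/
def IsMinimizing (H : Sig → ℝ) (μ : Measure Sig) : Prop :=
  IsProbabilityMeasure μ ∧ μ.map shft = μ ∧
  ∀ ν : Measure Sig, IsProbabilityMeasure ν → ν.map shft = ν →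
    ∫ x, H x ∂μ ≤ ∫ x, H x ∂ν

/-- The (topological) support of a measure. -/
def mSupport (μ : Measure Sig) : Set Sig := {x | ∀ U : Set Sig, IsOpen U → x ∈ U → μ U ≠ 0}

/-- The Mather set of `H` : union of supports of minimizing measures. -/
def mather (H : Sig → ℝ) : Set Sig := {x | ∃ μ : Measure Sig, IsMinimizing H μ ∧ x ∈ mSupport μ}

/-- Birkhoff sum of the normalized potential. -/
noncomputable def birk (H : Sig → ℝ) (k : ℕ) (z : Sig) : ℝ :=
  ∑ i ∈ Finset.range k, (H (shft^[i] z) - Hbar H)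

/-- The quantity `S_n^p(x,y)` (an infimum in `EReal`, `+∞` when the defining set is empty). -/
noncomputable def SBar (H : Sig → ℝ) (p n : ℕ) (x y : Sig) : EReal :=
  sInf {s : EReal | ∃ k : ℕ, n ≤ k ∧ ∃ z : Sig, nClose p z x ∧ nClose p (shft^[k] z) y ∧
    s = (birk H k z : EReal)}

/-- The Peierls barrier `h(x,y)`; since `S_n^p(x,y)` is nondecreasing in both `n` and `p`,
the double limit is a double supremum. -/
noncomputable def peierls (H : Sig → ℝ) (x y : Sig) : EReal := ⨆ p : ℕ, ⨆ n : ℕ, SBar H p n x y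

/-- The Lax-Oleinik operator (the two preimages of `y` under the shift are `0y` and `1y`). -/
noncomputable def laxOleinik (H V : Sig → ℝ) : Sig → ℝ :=
  fun y => min (V (cons2 0 y) + H (cons2 0 y)) (V (cons2 1 y) + H (cons2 1 y))

/-- A calibrated sub-action of `H`. -/
def IsCalibrated (H V : Sig → ℝ) : Prop :=
  Continuous V ∧ laxOleinik H V = fun y => V y + Hbar H

/-- Membership in the class `𝕂`. -/
def InK (H V : Sig → ℝ) : Prop :=
  Continuous V ∧ ∀ n : ℕ, 1 ≤ n → Var V n ≤ ∑' k : ℕ, Var H (n + 1 + k)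

/-- A reduced double-well type potential with data `(H_n^0)`, `(H_n^1)` (indexed from `n = 1`). -/
structure ReducedDW (H : Sig → ℝ) (H0 H1 : ℕ → ℝ) : Prop where
  cont : Continuous H
  nonneg : ∀ x, 0 ≤ H x
  svar : SummableVar H
  zero : ∀ x ∈ cyl [0, 0] ∪ cyl [1, 1], H x = 0
  pos0 : ∀ n, 1 ≤ n → 0 < H0 n
  pos1 : ∀ n, 1 ≤ n → 0 < H1 n
  val0 : ∀ n, 1 ≤ n → ∀ x ∈ cyl (0 :: (List.replicate n 1 ++ [0])), H x = H0 n
  val1 : ∀ n, 1 ≤ n → ∀ x ∈ cyl (1 :: (List.replicate n 0 ++ [1])), H x = H1 n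
  bdd0 : ∀ k : ℕ, BddAbove (Set.range fun n : ℕ => |H0 (k + 1) - H0 (k + 1 + n)|)
  bdd1 : ∀ k : ℕ, BddAbove (Set.range fun n : ℕ => |H1 (k + 1) - H1 (k + 1 + n)|)
  sum0 : Summable (fun k : ℕ => ⨆ n : ℕ, |H0 (k + 1) - H0 (k + 1 + n)|)
  sum1 : Summable (fun k : ℕ => ⨆ n : ℕ, |H1 (k + 1) - H1 (k + 1 + n)|)

/-- A double-well type potential with data `a_n^0, a_n^1, b_n^0, b_n^1` (indexed from `n = 1`). -/
structure DW (H : Sig → ℝ) (a0 a1 b0 b1 : ℕ → ℝ) : Prop where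
  cont : Continuous H
  nonneg : ∀ x, 0 ≤ H x
  svar : SummableVar H
  anneg0 : ∀ n, 1 ≤ n → 0 ≤ a0 n
  anneg1 : ∀ n, 1 ≤ n → 0 ≤ a1 n
  bpos0 : ∀ n, 1 ≤ n → 0 < b0 n
  bpos1 : ∀ n, 1 ≤ n → 0 < b1 n
  vala0 : ∀ n, 1 ≤ n → ∀ x ∈ cyl (0 :: (List.replicate n 0 ++ [1])), H x = a0 n
  vala1 : ∀ n, 1 ≤ n → ∀ x ∈ cyl (1 :: (List.replicate n 1 ++ [0])), H x = a1 n
  valb0 : ∀ n, 1 ≤ n → ∀ x ∈ cyl (0 :: (List.replicate n 1 ++ [0])), H x = b0 n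
  valb1 : ∀ n, 1 ≤ n → ∀ x ∈ cyl (1 :: (List.replicate n 0 ++ [1])), H x = b1 n
  suma0 : Summable (fun n : ℕ => ((n + 1 : ℕ) : ℝ) * a0 (n + 1))
  suma1 : Summable (fun n : ℕ => ((n + 1 : ℕ) : ℝ) * a1 (n + 1))
  bddb0 : ∀ k : ℕ, BddAbove (Set.range fun n : ℕ => |b0 (k + 1) - b0 (k + 1 + n)|)
  bddb1 : ∀ k : ℕ, BddAbove (Set.range fun n : ℕ => |b1 (k + 1) - b1 (k + 1 + n)|)
  sumb0 : Summable (fun k : ℕ => ⨆ n : ℕ, |b0 (k + 1) - b0 (k + 1 + n)|)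
  sumb1 : Summable (fun k : ℕ => ⨆ n : ℕ, |b1 (k + 1) - b1 (k + 1 + n)|)

/-- The series `F_β(λ) = Σ_{k≥1} λ^{-k} e^{-β H_k}`. -/
noncomputable def Fser (β : ℝ) (Hs : ℕ → ℝ) (lam : ℝ) : ℝ :=
  ∑' k : ℕ, (lam ^ (k + 1))⁻¹ * Real.exp (-β * Hs (k + 1))

/-- The series `F̃_β(λ) = Σ_{k≥1} k λ^{-k} e^{-β H_k}`. -/
noncomputable def Ftser (β : ℝ) (Hs : ℕ → ℝ) (lam : ℝ) : ℝ :=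
  ∑' k : ℕ, ((k + 1 : ℕ) : ℝ) * (lam ^ (k + 1))⁻¹ * Real.exp (-β * Hs (k + 1))

/-- The data of the Ruelle-Perron-Frobenius solution and Gibbs measure at inverse temperature `β`:
eigenfunction `Φ` (positive, continuous, max 1), eigenvalue `lam`, eigenprobability `ν`,
and the Gibbs measure `μ = Φ ν / ∫ Φ dν`. -/
def GibbsData (H : Sig → ℝ) (β : ℝ) (Φ : Sig → ℝ) (lam : ℝ) (ν μ : Measure Sig) : Prop :=
  Continuous Φ ∧ (∀ x, 0 < Φ x) ∧ IsGreatest (Set.range Φ) 1 ∧ 0 < lam ∧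
  (transfer β H Φ = fun x => lam * Φ x) ∧
  IsProbabilityMeasure ν ∧
  (∀ f : Sig → ℝ, Continuous f → ∫ x, transfer β H f x ∂ν = lam * ∫ x, f x ∂ν) ∧
  μ = (ENNReal.ofReal (∫ x, Φ x ∂ν))⁻¹ • ν.withDensity (fun x => ENNReal.ofReal (Φ x))

/-! basic infra -/

section Infra

/-- word concatenation on the left -/
def wcat : List (Fin 2) → Sig → Sig
  | [], x => x
  | a :: t, x => cons2 a (wcat t x)

@[simp] lemma cons2_zero (i : Fin 2) (x : Sig) : cons2 i x 0 = i := rfl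
@[simp] lemma cons2_succ (i : Fin 2) (x : Sig) (n : ℕ) : cons2 i x (n+1) = x n := rfl
@[simp] lemma shft_cons2 (i : Fin 2) (x : Sig) : shft (cons2 i x) = x := rfl

lemma wcat_apply (w : List (Fin 2)) (x : Sig) (n : ℕ) :
    wcat w x n = if h : n < w.length then w.get ⟨n, h⟩ else x (n - w.length) := by
  induction w generalizing n with
  | nil => simp [wcat]
  | cons a t ih =>
    cases n with
    | zero => simp [wcat]
    | succ m => simp [wcat, ih m, Nat.succ_sub_succ]

lemma continuous_cons2 (i : Fin 2) : Continuous (cons2 i) := by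
  apply continuous_pi
  intro n
  cases n with
  | zero => exact continuous_const
  | succ m => exact continuous_apply m

lemma continuous_shft : Continuous shft := by
  apply continuous_pi; intro n; exact continuous_apply (n+1)

lemma mem_cyl_nil (x : Sig) : x ∈ cyl [] := by intro i h; simp at h

lemma mem_cyl_cons {a : Fin 2} {w : List (Fin 2)} {x : Sig} :
    x ∈ cyl (a :: w) ↔ x 0 = a ∧ shft x ∈ cyl w := by
  constructor
  · intro h
    refine ⟨h 0 (by simp), fun i hi => ?_⟩
    exact h (i+1) (by simpa using Nat.succ_lt_succ hi)
  · rintro ⟨h0, hs⟩ i hi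
    cases i with
    | zero => exact h0
    | succ m => exact hs m (by simpa using Nat.lt_of_succ_lt_succ hi)

lemma cons2_mem_cyl_cons {a b : Fin 2} {w : List (Fin 2)} {x : Sig} :
    cons2 a x ∈ cyl (b :: w) ↔ a = b ∧ x ∈ cyl w := by
  rw [mem_cyl_cons]; simp

lemma isClopen_cyl (w : List (Fin 2)) : IsClopen (cyl w) := by
  induction w with
  | nil => have : cyl ([] : List (Fin 2)) = Set.univ := Set.eq_univ_of_forall mem_cyl_nil
           rw [this]; exact isClopen_univ
  | cons a t ih =>
    have : cyl (a :: t) = ((fun x : Sig => x 0) ⁻¹' {a}) ∩ (shft ⁻¹' cyl t) := by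
      ext x; simp [mem_cyl_cons, Set.mem_preimage]
    rw [this]
    exact ((isClopen_discrete {a}).preimage (continuous_apply 0)).inter (ih.preimage continuous_shft)

lemma measurableSet_cyl (w : List (Fin 2)) : MeasurableSet (cyl w) :=
  (isClopen_cyl w).isOpen.measurableSet

lemma wcat_mem_cyl (w : List (Fin 2)) (z : Sig) : wcat w z ∈ cyl w := by
  intro i h; rw [wcat_apply]; simp [h]

lemma eq_wcat_of_mem_cyl {w : List (Fin 2)} {x : Sig} (h : x ∈ cyl w) :
    x = wcat w (fun n => x (n + w.length)) := by
  funext n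
  rw [wcat_apply]
  split
  · next hn => exact h n hn
  · next hn => congr 1; omega

lemma cyl_mono {u v : List (Fin 2)} (x : Sig) (h : x ∈ cyl (u ++ v)) : x ∈ cyl u := by
  intro i hi
  have := h i (by simp; omega)
  rw [this]
  simp only [List.get_eq_getElem]
  exact List.getElem_append_left hi

end Infra

section KeyH

lemma fin2_cases (a : Fin 2) : a = 0 ∨ a = 1 := by fin_cases a <;> simp

lemma fin2_ne1 {a b c : Fin 2} (h : a ≠ b) (h2 : c ≠ b) : c = a := by
  revert h h2; revert a b c; decide

lemma fin2_ne2 {a b c : Fin 2} (h : a ≠ b) (h2 : c ≠ a) : c = b := by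
  revert h h2; revert a b c; decide

lemma fin2_eq_one_of_ne_zero {c : Fin 2} (h : c ≠ 0) : c = 1 := by revert h; revert c; decide

lemma fin2_eq_zero_of_ne_one {c : Fin 2} (h : c ≠ 1) : c = 0 := by revert h; revert c; decide

lemma getElem_rep_app {a b : Fin 2} {n j : ℕ} (h : j < n + 1) :
    (List.replicate n b ++ [a]).get ⟨j, by simp; omega⟩ = if j < n then b else a := by
  simp only [List.get_eq_getElem]
  by_cases hj : j < n
  · rw [List.getElem_append_left (by simpa using hj)]
    simp [hj]
  · have hjn : j = n := by omega
    subst hjn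
    rw [List.getElem_append_right (by simp)]
    simp

lemma mem_cyl_run {a b : Fin 2} {n : ℕ} {x : Sig} :
    x ∈ cyl (List.replicate n b ++ [a]) ↔ (∀ j, j < n → x j = b) ∧ x n = a := by
  constructor
  · intro h
    constructor
    · intro j hj
      have := h j (by simp; omega)
      rw [this]
      have := getElem_rep_app (a := a) (b := b) (n := n) (j := j) (by omega)
      rw [this]; simp [hj]
    · have := h n (by simp)
      rw [this]
      have := getElem_rep_app (a := a) (b := b) (n := n) (j := n) (by omega)
      rw [this]; simp
  · rintro ⟨hb, ha⟩ i hi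
    have hi' : i < n + 1 := by simpa using hi
    rw [getElem_rep_app hi']
    by_cases h : i < n
    · simp [h, hb i h]
    · have : i = n := by omega
      subst this; simp [h, ha]

lemma mem_cyl_runWord {a b : Fin 2} {n : ℕ} {x : Sig} :
    x ∈ cyl (a :: (List.replicate n b ++ [a])) ↔
      (x 0 = a ∧ (∀ j, 1 ≤ j → j ≤ n → x j = b) ∧ x (n+1) = a) := by
  rw [mem_cyl_cons, mem_cyl_run]
  unfold shft
  constructor
  · rintro ⟨h0, hb, ha⟩
    refine ⟨h0, fun j h1 h2 => ?_, ha⟩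
    obtain ⟨j', rfl⟩ : ∃ j', j = j' + 1 := ⟨j - 1, by omega⟩
    exact hb j' (by omega)
  · rintro ⟨h0, hb, ha⟩
    exact ⟨h0, fun j hj => hb (j+1) (by omega) (by omega), ha⟩

variable {H : Sig → ℝ} {H0 H1 : ℕ → ℝ}

lemma Hzero (hR : ReducedDW H H0 H1) {x : Sig} (h : x 0 = x 1) : H x = 0 := by
  apply hR.zero
  rcases fin2_cases (x 0) with h0 | h0
  · left; intro i hi
    simp at hi
    interval_cases i <;> simp [h0, ← h, h0]
  · right; intro i hi
    simp at hi
    interval_cases i <;> simp [h0, ← h, h0]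

lemma keyH (hR : ReducedDW H H0 H1) (x y : Sig) (m : ℕ) (hm : 1 ≤ m)
    (hag : ∀ i, i ≤ m + 1 → x i = y i) (hsw : x m ≠ x (m+1)) : H x = H y := by
  by_cases h01 : x 0 = x 1
  · rw [Hzero hR h01, Hzero hR (x := y) ?_]
    rw [← hag 0 (by omega), ← hag 1 (by omega)]; exact h01
  · -- find first return
    have hex : ∃ k, x (k+2) = x 0 ∧ k + 2 ≤ m + 1 := by
      by_contra hc
      push_neg at hc
      have hb : ∀ i, 1 ≤ i → i ≤ m + 1 → x i = x 1 := by
        intro i h1 h2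
        rcases Nat.lt_or_ge i 2 with h | h
        · have : i = 1 := by omega
          rw [this]
        · obtain ⟨k, rfl⟩ : ∃ k, i = k + 2 := ⟨i - 2, by omega⟩
          exact fin2_ne2 h01 (fun hcc => by have := hc k hcc; omega)
      exact hsw ((hb m (by omega) (by omega)).trans (hb (m+1) (by omega) (by omega)).symm)
    have hex' : ∃ k, x (k+2) = x 0 ∧ k + 2 ≤ m + 1 := hex
    set k := Nat.find hex' with hk
    obtain ⟨hret, hkle⟩ := Nat.find_spec hex'
    have hmid : ∀ j, 1 ≤ j → j ≤ k + 1 → x j = x 1 := by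
      intro j h1 h2
      rcases Nat.lt_or_ge j 2 with h | h
      · have : j = 1 := by omega
        rw [this]
      · obtain ⟨i, rfl⟩ : ∃ i, j = i + 2 := ⟨j - 2, by omega⟩
        have hfm := Nat.find_min hex' (m := i) (by omega)
        push_neg at hfm
        exact fin2_ne2 h01 (fun hcc => absurd (hfm hcc) (by omega))
    have hxmem : x ∈ cyl (x 0 :: (List.replicate (k+1) (x 1) ++ [x 0])) :=
      mem_cyl_runWord.mpr ⟨rfl, hmid, hret⟩
    have hymem : y ∈ cyl (x 0 :: (List.replicate (k+1) (x 1) ++ [x 0])) := by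
      apply mem_cyl_runWord.mpr
      refine ⟨(hag 0 (by omega)).symm, fun j h1 h2 => ?_, ?_⟩
      · rw [← hag j (by omega)]; exact hmid j h1 h2
      · rw [← hag (k+2) (by omega)]; exact hret
    rcases fin2_cases (x 0) with h0 | h0
    · have h1 : x 1 = 1 := fin2_eq_one_of_ne_zero (fun hc => h01 (by rw [h0, hc]))
      rw [h0, h1] at hxmem hymem
      rw [hR.val0 (k+1) (by omega) x hxmem, hR.val0 (k+1) (by omega) y hymem]
    · have h1 : x 1 = 0 := by
        rcases fin2_cases (x 1) with h | h
        · exact h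
        · exact absurd (h0.trans h.symm) h01
      rw [h0, h1] at hxmem hymem
      rw [hR.val1 (k+1) (by omega) x hxmem, hR.val1 (k+1) (by omega) y hymem]

end KeyH

section Const

lemma wcat_agree {s : List (Fin 2)} (z z' : Sig) {j : ℕ} (h : j < s.length) :
    wcat s z j = wcat s z' j := by
  rw [wcat_apply, wcat_apply]; simp [h]

lemma wcat_add (v : List (Fin 2)) (y : Sig) (i : ℕ) : wcat v y (v.length + i) = y i := by
  rw [wcat_apply]
  have h : ¬ (v.length + i < v.length) := by omega
  simp [h]

lemma wcat_wcat_agree (v s : List (Fin 2)) (z z' : Sig) {k : ℕ}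
    (hk : k < v.length + s.length) :
    wcat v (wcat s z) k = wcat v (wcat s z') k := by
  rw [wcat_apply v (wcat s z) k, wcat_apply v (wcat s z') k]
  by_cases h : k < v.length
  · simp [h]
  · simp only [h, dif_neg, not_false_iff]
    exact wcat_agree _ _ (by omega)

lemma modulus {Φ : Sig → ℝ} (hΦ : Continuous Φ) (ε : ℝ) (hε : 0 < ε) :
    ∃ N : ℕ, ∀ u v : Sig, nClose N u v → |Φ u - Φ v| ≤ ε := by
  set S : Set (Sig × Sig) := {p | ε ≤ |Φ p.1 - Φ p.2|} with hS
  have hScl : IsClosed S := by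
    have hcont : Continuous (fun p : Sig × Sig => |Φ p.1 - Φ p.2|) :=
      ((hΦ.comp continuous_fst).sub (hΦ.comp continuous_snd)).abs
    exact isClosed_le continuous_const hcont
  have hScomp : IsCompact S := hScl.isCompact
  set Z : ℕ → Set (Sig × Sig) := fun i => {p | p.1 i = p.2 i} with hZ
  have hZcl : ∀ i, IsClosed (Z i) := by
    intro i
    have : Z i = (fun p : Sig × Sig => (p.1 i, p.2 i)) ⁻¹' {q : Fin 2 × Fin 2 | q.1 = q.2} := rfl
    rw [this]
    exact (isClosed_discrete _).preimage
      (((continuous_apply i).comp continuous_fst).prodMk ((continuous_apply i).comp continuous_snd))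
  have hempty : S ∩ ⋂ i, Z i = ∅ := by
    ext p
    simp only [Set.mem_inter_iff, Set.mem_iInter, Set.mem_empty_iff_false, iff_false, not_and]
    intro hpS hall
    have : p.1 = p.2 := funext fun i => hall i
    rw [hS] at hpS
    simp only [Set.mem_setOf_eq, this, sub_self, abs_zero] at hpS
    linarith
  obtain ⟨t, ht⟩ := hScomp.elim_finite_subfamily_closed Z hZcl hempty
  refine ⟨(t.sup id) + 1, fun u v huv => ?_⟩
  by_contra hcon
  push_neg at hcon
  have hmem : (u, v) ∈ S ∩ ⋂ i ∈ t, Z i := by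
    constructor
    · exact le_of_lt hcon
    · simp only [Set.mem_iInter]
      intro i hi
      exact huv i (by have := Finset.le_sup (f := id) hi; simp at this; omega)
  rw [ht] at hmem
  exact hmem

variable {H : Sig → ℝ} {H0 H1 : ℕ → ℝ} {β : ℝ} {Φ : Sig → ℝ} {lam : ℝ}

lemma transfer_smul (c : ℝ) (g : Sig → ℝ) :
    transfer β H (fun x => c * g x) = fun x => c * transfer β H g x := by
  funext x; unfold transfer; ring

lemma transfer_mono {f g : Sig → ℝ} (h : ∀ x, f x ≤ g x) (x : Sig) :
    transfer β H f x ≤ transfer β H g x := by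
  unfold transfer
  have e0 := Real.exp_pos (-β * H (cons2 0 x))
  have e1 := Real.exp_pos (-β * H (cons2 1 x))
  nlinarith [h (cons2 0 x), h (cons2 1 x)]

lemma iter_eig (heig : ∀ x, transfer β H Φ x = lam * Φ x) (m : ℕ) :
    (transfer β H)^[m] Φ = fun x => lam ^ m * Φ x := by
  induction m with
  | zero => simp
  | succ k ih =>
    rw [Function.iterate_succ_apply', ih, transfer_smul]
    funext x
    rw [heig x]
    ring

lemma iter_smul (c : ℝ) (g : Sig → ℝ) (m : ℕ) :
    (transfer β H)^[m] (fun x => c * g x) = fun x => c * (transfer β H)^[m] g x := by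
  induction m with
  | zero => rfl
  | succ k ih =>
    rw [Function.iterate_succ_apply', Function.iterate_succ_apply', ih, transfer_smul]

lemma iter_nonneg {f : Sig → ℝ} (hf : ∀ x, 0 ≤ f x) (m : ℕ) (x : Sig) :
    0 ≤ (transfer β H)^[m] f x := by
  induction m generalizing x with
  | zero => exact hf x
  | succ k ih =>
    rw [Function.iterate_succ_apply']
    unfold transfer
    have e0 := (Real.exp_pos (-β * H (cons2 0 x))).le
    have e1 := (Real.exp_pos (-β * H (cons2 1 x))).le
    have := ih (cons2 0 x); have := ih (cons2 1 x)
    positivity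

lemma iter_mono {f g : Sig → ℝ} (h : ∀ x, f x ≤ g x) (m : ℕ) (x : Sig) :
    (transfer β H)^[m] f x ≤ (transfer β H)^[m] g x := by
  induction m generalizing x with
  | zero => exact h x
  | succ k ih =>
    rw [Function.iterate_succ_apply', Function.iterate_succ_apply']
    exact transfer_mono (fun y => ih y) x

/-- The main constancy claim, by induction on `m`. -/
lemma claim_ind (hR : ReducedDW H H0 H1)
    (heig : ∀ x, transfer β H Φ x = lam * Φ x)
    (s : List (Fin 2)) (j : ℕ) (hj : j + 1 < s.length)
    (hsw : wcat s zpt j ≠ wcat s zpt (j+1))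
    {ε : ℝ} {N : ℕ} (hmod : ∀ u v : Sig, nClose N u v → |Φ u - Φ v| ≤ ε) :
    ∀ m (v : List (Fin 2)) (z z' : Sig), N ≤ m + v.length + s.length →
      |(transfer β H)^[m] Φ (wcat v (wcat s z)) - (transfer β H)^[m] Φ (wcat v (wcat s z'))|
        ≤ ε * (transfer β H)^[m] (fun _ => (1:ℝ)) (wcat v (wcat s z)) := by
  intro m
  induction m with
  | zero =>
    intro v z z' hN
    simp only [Function.iterate_zero, id_eq]
    have hclose : nClose N (wcat v (wcat s z)) (wcat v (wcat s z')) := by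
      intro k hk
      exact wcat_wcat_agree v s z z' (by omega)
    have := hmod _ _ hclose
    simpa using this
  | succ m ih =>
    intro v z z' hN
    set P := wcat v (wcat s z) with hP
    set P' := wcat v (wcat s z') with hP'
    have hHeq : ∀ a : Fin 2, H (cons2 a P) = H (cons2 a P') := by
      intro a
      apply keyH hR _ _ (v.length + 1 + j) (by omega)
      · intro i hi
        cases i with
        | zero => rfl
        | succ i' =>
          simp only [cons2_succ]
          rw [hP, hP']
          exact wcat_wcat_agree v s z z' (by omega)
      · have h1 : cons2 a P (v.length + 1 + j) = wcat s z j := by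
          have : v.length + 1 + j = (v.length + j) + 1 := by omega
          rw [this]
          simp only [cons2_succ]
          rw [hP, wcat_add]
        have h2 : cons2 a P (v.length + 1 + j + 1) = wcat s z (j + 1) := by
          have : v.length + 1 + j + 1 = (v.length + (j+1)) + 1 := by omega
          rw [this]
          simp only [cons2_succ]
          rw [hP, wcat_add]
        rw [h1, h2, wcat_agree z zpt (by omega), wcat_agree z zpt (by omega)]
        exact hsw
    simp only [Function.iterate_succ_apply']
    unfold transfer
    rw [← hHeq 0, ← hHeq 1]
    set F := (transfer β H)^[m] Φ with hF
    set G := (transfer β H)^[m] (fun _ => (1:ℝ)) with hG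
    have key : ∀ a : Fin 2, |F (cons2 a P) - F (cons2 a P')| ≤ ε * G (cons2 a P) := by
      intro a
      have h0 : cons2 a P = wcat (a :: v) (wcat s z) := rfl
      have h0' : cons2 a P' = wcat (a :: v) (wcat s z') := rfl
      rw [h0, h0']
      exact ih (a :: v) z z' (by simp; omega)
    have e0 := (Real.exp_pos (-β * H (cons2 0 P))).le
    have e1 := (Real.exp_pos (-β * H (cons2 1 P))).le
    calc |(Real.exp (-β * H (cons2 0 P)) * F (cons2 0 P)
            + Real.exp (-β * H (cons2 1 P)) * F (cons2 1 P))
          - (Real.exp (-β * H (cons2 0 P)) * F (cons2 0 P')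
            + Real.exp (-β * H (cons2 1 P)) * F (cons2 1 P'))|
        = |Real.exp (-β * H (cons2 0 P)) * (F (cons2 0 P) - F (cons2 0 P'))
            + Real.exp (-β * H (cons2 1 P)) * (F (cons2 1 P) - F (cons2 1 P'))| := by ring_nf
      _ ≤ |Real.exp (-β * H (cons2 0 P)) * (F (cons2 0 P) - F (cons2 0 P'))|
            + |Real.exp (-β * H (cons2 1 P)) * (F (cons2 1 P) - F (cons2 1 P'))| := abs_add_le _ _
      _ = Real.exp (-β * H (cons2 0 P)) * |F (cons2 0 P) - F (cons2 0 P')|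
            + Real.exp (-β * H (cons2 1 P)) * |F (cons2 1 P) - F (cons2 1 P')| := by
            rw [abs_mul, abs_mul, abs_of_nonneg e0, abs_of_nonneg e1]
      _ ≤ Real.exp (-β * H (cons2 0 P)) * (ε * G (cons2 0 P))
            + Real.exp (-β * H (cons2 1 P)) * (ε * G (cons2 1 P)) := by
            have k0 := key 0; have k1 := key 1
            have := mul_le_mul_of_nonneg_left k0 e0
            have := mul_le_mul_of_nonneg_left k1 e1
            linarith
      _ = ε * (Real.exp (-β * H (cons2 0 P)) * G (cons2 0 P)
            + Real.exp (-β * H (cons2 1 P)) * G (cons2 1 P)) := by ring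

lemma phi_const (hR : ReducedDW H H0 H1) (hΦc : Continuous Φ) (hΦpos : ∀ x, 0 < Φ x)
    (hΦle : ∀ x, Φ x ≤ 1) (hlam : 0 < lam)
    (heig : ∀ x, transfer β H Φ x = lam * Φ x)
    (s : List (Fin 2)) (j : ℕ) (hj : j + 1 < s.length)
    (hsw : wcat s zpt j ≠ wcat s zpt (j+1)) (z z' : Sig) :
    Φ (wcat s z) = Φ (wcat s z') := by
  obtain ⟨x₀, -, hx₀'⟩ := isCompact_univ.exists_isMinOn (Set.univ_nonempty)
    hΦc.continuousOn
  have hx₀ : ∀ y, y ∈ (Set.univ : Set Sig) → Φ x₀ ≤ Φ y := fun y hy => hx₀' hy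
  set c := Φ x₀ with hc
  have hcpos : 0 < c := hΦpos x₀
  have hcle : ∀ x, c ≤ Φ x := fun x => hx₀ x trivial
  have key : ∀ ε : ℝ, 0 < ε → |Φ (wcat s z) - Φ (wcat s z')| ≤ ε / c := by
    intro ε hε
    obtain ⟨N, hmod⟩ := modulus hΦc ε hε
    have hcl := claim_ind hR heig s j hj hsw hmod N [] z z' (by simp)
    simp only [wcat] at hcl
    rw [iter_eig heig] at hcl
    simp only at hcl
    have hGF : c * (transfer β H)^[N] (fun _ => (1:ℝ)) (wcat s z)
        ≤ lam ^ N * Φ (wcat s z) := by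
      have h1 : ∀ x, c * (transfer β H)^[N] (fun _ => (1:ℝ)) x
          = (transfer β H)^[N] (fun _ => c) x := by
        intro x
        have he : (fun _ : Sig => c) = (fun y => c * (fun _ : Sig => (1:ℝ)) y) := by
          funext y; ring
        rw [he, iter_smul]
      rw [h1]
      have := iter_mono (H := H) (β := β) (f := fun _ => c) (g := Φ) hcle N (wcat s z)
      rw [iter_eig heig] at this
      exact this
    have hpow : (0:ℝ) < lam ^ N := pow_pos hlam N
    have habs : lam ^ N * Φ (wcat s z) - lam ^ N * Φ (wcat s z')
        = lam ^ N * (Φ (wcat s z) - Φ (wcat s z')) := by ring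
    rw [habs, abs_mul, abs_of_pos hpow] at hcl
    have hG : (transfer β H)^[N] (fun _ => (1:ℝ)) (wcat s z) ≤ lam ^ N / c := by
      rw [div_eq_inv_mul, ← mul_le_mul_iff_right₀ hcpos]
      calc c * (transfer β H)^[N] (fun _ => (1:ℝ)) (wcat s z)
          ≤ lam ^ N * Φ (wcat s z) := hGF
        _ ≤ lam ^ N * 1 := by
            exact mul_le_mul_of_nonneg_left (hΦle _) hpow.le
        _ = c * (c⁻¹ * lam ^ N) := by field_simp
    have : lam ^ N * |Φ (wcat s z) - Φ (wcat s z')| ≤ ε * (lam ^ N / c) := by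
      calc lam ^ N * |Φ (wcat s z) - Φ (wcat s z')|
          ≤ ε * (transfer β H)^[N] (fun _ => (1:ℝ)) (wcat s z) := hcl
        _ ≤ ε * (lam ^ N / c) := mul_le_mul_of_nonneg_left hG hε.le
    have h2 : ε * (lam ^ N / c) = lam ^ N * (ε / c) := by ring
    rw [h2] at this
    exact le_of_mul_le_mul_left this hpow
  by_contra hne
  have habs : 0 < |Φ (wcat s z) - Φ (wcat s z')| := abs_pos.mpr (sub_ne_zero.mpr hne)
  have hk2 := key (|Φ (wcat s z) - Φ (wcat s z')| * c / 2) (by positivity)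
  have hhalf : |Φ (wcat s z) - Φ (wcat s z')| * c / 2 / c
      = |Φ (wcat s z) - Φ (wcat s z')| / 2 := by
    field_simp
  rw [hhalf] at hk2
  linarith

end Const

section Meas

variable {H : Sig → ℝ} {H0 H1 : ℕ → ℝ} {β lam : ℝ} {ν : Measure Sig}

lemma cont_integrable [IsFiniteMeasure ν] {g : Sig → ℝ} (hg : Continuous g) :
    Integrable g ν := by
  apply hg.integrable_of_hasCompactSupport
  exact IsCompact.of_isClosed_subset isCompact_univ (isClosed_tsupport _) (Set.subset_univ _)

lemma transfer_continuous (hH : Continuous H) {f : Sig → ℝ} (hf : Continuous f) :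
    Continuous (transfer β H f) := by
  unfold transfer
  exact ((Real.continuous_exp.comp (continuous_const.mul (hH.comp (continuous_cons2 0)))).mul
      (hf.comp (continuous_cons2 0))).add
    ((Real.continuous_exp.comp (continuous_const.mul (hH.comp (continuous_cons2 1)))).mul
      (hf.comp (continuous_cons2 1)))

lemma indicator_continuous {s : Set Sig} (hs : IsClopen s) {g : Sig → ℝ} (hg : Continuous g) :
    Continuous (s.indicator g) := by
  classical
  have h : s.indicator g = fun x => if x ∈ s then g x else 0 := by
    funext x; by_cases hx : x ∈ s <;> simp [hx]
  rw [h]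
  apply Continuous.if _ hg continuous_const
  intro a ha
  rw [show {x | x ∈ s} = s from rfl, hs.frontier_eq] at ha
  exact absurd ha (Set.notMem_empty a)

/-- the single transfer step on cylinder integrals -/
lemma step (hH : Continuous H) (hν : IsProbabilityMeasure ν) (hlam : 0 < lam)
    (hνL : ∀ f : Sig → ℝ, Continuous f → ∫ x, transfer β H f x ∂ν = lam * ∫ x, f x ∂ν)
    (w : List (Fin 2)) (i : Fin 2) {G : Sig → ℝ} (hG : Continuous G) :
    ∫ x in cyl (i :: w), G x ∂ν
      = lam⁻¹ * ∫ x in cyl w, Real.exp (-β * H (cons2 i x)) * G (cons2 i x) ∂ν := by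
  haveI := hν
  classical
  set f := (cyl (i :: w)).indicator G with hf
  have hfc : Continuous f := indicator_continuous (isClopen_cyl _) hG
  have hcw : ∀ (a : Fin 2) (x : Sig), f (cons2 a x)
      = if a = i ∧ x ∈ cyl w then G (cons2 a x) else 0 := by
    intro a x
    rw [hf, Set.indicator_apply]
    congr 1
    simp [cons2_mem_cyl_cons]
  have h1 : ∀ x, transfer β H f x
      = (cyl w).indicator (fun y => Real.exp (-β * H (cons2 i y)) * G (cons2 i y)) x := by
    intro x
    unfold transfer
    rw [hcw 0 x, hcw 1 x, Set.indicator_apply]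
    by_cases hx : x ∈ cyl w
    · fin_cases i <;> simp [hx]
    · simp [hx]
  have h2 := hνL f hfc
  rw [integral_congr_ae (Filter.Eventually.of_forall h1)] at h2
  rw [integral_indicator (measurableSet_cyl w)] at h2
  rw [hf, integral_indicator (measurableSet_cyl (i :: w))] at h2
  rw [h2]
  field_simp

lemma rr_step (hR : ReducedDW H H0 H1) (hν : IsProbabilityMeasure ν) (hlam : 0 < lam)
    (hνL : ∀ f : Sig → ℝ, Continuous f → ∫ x, transfer β H f x ∂ν = lam * ∫ x, f x ∂ν)
    (w : List (Fin 2)) (i : Fin 2) (hval : ℝ)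
    (hconst : ∀ x ∈ cyl w, H (cons2 i x) = hval) :
    (ν (cyl (i :: w))).toReal = lam⁻¹ * Real.exp (-β * hval) * (ν (cyl w)).toReal := by
  haveI := hν
  have h := step (β := β) hR.cont hν hlam hνL w i continuous_const (G := fun _ => (1:ℝ))
  simp only [mul_one] at h
  have h2 : ∫ x in cyl w, Real.exp (-β * H (cons2 i x)) ∂ν
      = ∫ _x in cyl w, Real.exp (-β * hval) ∂ν := by
    apply setIntegral_congr_fun (measurableSet_cyl w)
    intro x hx
    dsimp only
    rw [hconst x hx]
  rw [h2, setIntegral_const, setIntegral_const] at h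
  simp only [smul_eq_mul, mul_one, measureReal_def] at h
  rw [h]
  ring

lemma exp_cont (hH : Continuous H) (i : Fin 2) :
    Continuous (fun x : Sig => Real.exp (-β * H (cons2 i x))) :=
  Real.continuous_exp.comp (continuous_const.mul (hH.comp (continuous_cons2 i)))

lemma rr_step_le (hβ : 0 < β) (hR : ReducedDW H H0 H1) (hν : IsProbabilityMeasure ν)
    (hlam : 0 < lam)
    (hνL : ∀ f : Sig → ℝ, Continuous f → ∫ x, transfer β H f x ∂ν = lam * ∫ x, f x ∂ν)
    (w : List (Fin 2)) (i : Fin 2) :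
    (ν (cyl (i :: w))).toReal ≤ lam⁻¹ * (ν (cyl w)).toReal := by
  haveI := hν
  have h := step (β := β) hR.cont hν hlam hνL w i continuous_const (G := fun _ => (1:ℝ))
  simp only [mul_one] at h
  have h2 : ∫ x in cyl w, Real.exp (-β * H (cons2 i x)) ∂ν
      ≤ ∫ _x in cyl w, (1:ℝ) ∂ν := by
    apply setIntegral_mono_on
      ((cont_integrable (exp_cont hR.cont i)).integrableOn)
      ((cont_integrable continuous_const).integrableOn) (measurableSet_cyl w)
    intro x _
    rw [show (1:ℝ) = Real.exp 0 by simp]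
    apply Real.exp_le_exp.mpr
    have := hR.nonneg (cons2 i x)
    nlinarith
  rw [setIntegral_const] at h
  rw [setIntegral_const] at h2
  simp only [smul_eq_mul, mul_one, measureReal_def] at h h2
  rw [h]
  have hinv : (0:ℝ) ≤ lam⁻¹ := by positivity
  exact mul_le_mul_of_nonneg_left h2 hinv

lemma rr_step_ge (hβ : 0 < β) (hR : ReducedDW H H0 H1) (hν : IsProbabilityMeasure ν)
    (hlam : 0 < lam) {M : ℝ} (hM : ∀ x, H x ≤ M)
    (hνL : ∀ f : Sig → ℝ, Continuous f → ∫ x, transfer β H f x ∂ν = lam * ∫ x, f x ∂ν)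
    (w : List (Fin 2)) (i : Fin 2) :
    lam⁻¹ * Real.exp (-β * M) * (ν (cyl w)).toReal ≤ (ν (cyl (i :: w))).toReal := by
  haveI := hν
  have h := step (β := β) hR.cont hν hlam hνL w i continuous_const (G := fun _ => (1:ℝ))
  simp only [mul_one] at h
  have h2 : ∫ _x in cyl w, Real.exp (-β * M) ∂ν
      ≤ ∫ x in cyl w, Real.exp (-β * H (cons2 i x)) ∂ν := by
    apply setIntegral_mono_on
      ((cont_integrable continuous_const).integrableOn)
      ((cont_integrable (exp_cont hR.cont i)).integrableOn) (measurableSet_cyl w)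
    intro x _
    apply Real.exp_le_exp.mpr
    have := hM (cons2 i x)
    nlinarith
  rw [setIntegral_const] at h
  rw [setIntegral_const] at h2
  simp only [smul_eq_mul, mul_one, measureReal_def] at h h2
  rw [h]
  have hinv : (0:ℝ) ≤ lam⁻¹ := by positivity
  calc lam⁻¹ * Real.exp (-β * M) * (ν (cyl w)).toReal
      = lam⁻¹ * ((ν (cyl w)).toReal * Real.exp (-β * M)) := by ring
    _ ≤ lam⁻¹ * ∫ x in cyl w, Real.exp (-β * H (cons2 i x)) ∂ν :=
        mul_le_mul_of_nonneg_left h2 hinv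

end Meas

section Series

variable {lam β : ℝ}

lemma summable_geom_aux (hlam : 1 < lam) : Summable (fun k : ℕ => (lam ^ (k+1))⁻¹) := by
  have h0 : (0:ℝ) < lam := lt_trans one_pos hlam
  have h1 : lam⁻¹ < 1 := by rw [inv_lt_one_iff₀]; right; exact hlam
  have h2 : (0:ℝ) ≤ lam⁻¹ := by positivity
  have := (summable_geometric_of_lt_one h2 h1).mul_left lam⁻¹
  apply this.congr
  intro k
  rw [← inv_pow, pow_succ]
  ring

lemma summable_F (hlam : 1 < lam) (c : ℕ → ℝ) (hc : ∀ k, 0 ≤ c k ∧ c k ≤ 1) :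
    Summable (fun k : ℕ => (lam ^ (k+1))⁻¹ * c k) := by
  have h0 : (0:ℝ) < lam := lt_trans one_pos hlam
  apply Summable.of_nonneg_of_le (fun k => ?_) (fun k => ?_) (summable_geom_aux hlam)
  · have := (hc k).1; positivity
  · have h1 := (hc k).2
    have h2 : (0:ℝ) ≤ (lam ^ (k+1))⁻¹ := by positivity
    nlinarith

lemma Fser_summable (hlam : 1 < lam) (hβ : 0 < β) (Hs : ℕ → ℝ) (hHs : ∀ n, 1 ≤ n → 0 ≤ Hs n) :
    Summable (fun k : ℕ => (lam ^ (k+1))⁻¹ * Real.exp (-β * Hs (k+1))) := by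
  apply summable_F hlam
  intro k
  constructor
  · exact (Real.exp_pos _).le
  · rw [show (1:ℝ) = Real.exp 0 by simp]
    apply Real.exp_le_exp.mpr
    have := hHs (k+1) (by omega)
    nlinarith

lemma Fser_pos (hlam : 1 < lam) (hβ : 0 < β) (Hs : ℕ → ℝ) (hHs : ∀ n, 1 ≤ n → 0 ≤ Hs n) :
    0 < Fser β Hs lam := by
  have h0 : (0:ℝ) < lam := lt_trans one_pos hlam
  apply Summable.tsum_pos (Fser_summable hlam hβ Hs hHs) (fun k => ?_) 0
  · positivity
  · positivity

/-- the tail sum identity -/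
lemma tail_eq (hlam : 1 < lam) (hβ : 0 < β) (Hs : ℕ → ℝ) (hHs : ∀ n, 1 ≤ n → 0 ≤ Hs n) (m : ℕ) :
    ∑' j : ℕ, (lam ^ ((m+1) + j))⁻¹ * Real.exp (-β * Hs ((m+1) + j))
      = Fser β Hs lam - ∑ k ∈ Finset.range m, (lam ^ (k+1))⁻¹ * Real.exp (-β * Hs (k+1)) := by
  have hs := Fser_summable hlam hβ Hs hHs
  have h := Summable.sum_add_tsum_nat_add (f := fun k : ℕ => (lam ^ (k+1))⁻¹ * Real.exp (-β * Hs (k+1)))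
    m hs
  have h2 : ∑' j : ℕ, (lam ^ ((j+m)+1))⁻¹ * Real.exp (-β * Hs ((j+m)+1))
      = ∑' j : ℕ, (lam ^ ((m+1) + j))⁻¹ * Real.exp (-β * Hs ((m+1) + j)) := by
    apply tsum_congr
    intro j
    rw [show (j+m)+1 = (m+1)+j by omega]
  unfold Fser
  rw [← h, ← h2]
  ring

/-- the diagonal-regrouping equivalence -/
def diagEquiv : (Σ k : ℕ, Fin (k+1)) ≃ ℕ × ℕ where
  toFun q := (q.2.val, q.1 - q.2.val)
  invFun p := ⟨p.1 + p.2, ⟨p.1, by omega⟩⟩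
  left_inv := by
    rintro ⟨k, i⟩
    have hik := i.isLt
    have h : (i : ℕ) + (k - (i:ℕ)) = k := by omega
    refine Sigma.ext h ?_
    rw [Fin.heq_ext_iff (congrArg (· + 1) h)]
  right_inv := by
    rintro ⟨a, b⟩
    simp

lemma dsum (hlam : 1 < lam) {a : ℕ → ℝ} (ha0 : ∀ k, 0 ≤ a k)
    (hbound : ∀ k, a k ≤ (lam ^ (k+1))⁻¹) :
    ∑' n : ℕ, ∑' j : ℕ, a (n + j) = ∑' k : ℕ, ((k:ℝ) + 1) * a k := by
  have h0 : (0:ℝ) < lam := lt_trans one_pos hlam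
  have hg : Summable (fun k : ℕ => (lam⁻¹) ^ k) :=
    summable_geometric_of_lt_one (by positivity) (by rw [inv_lt_one_iff₀]; right; exact hlam)
  have hprod : Summable (fun p : ℕ × ℕ => a (p.1 + p.2)) := by
    have hb : Summable (fun p : ℕ × ℕ => lam⁻¹ * ((lam⁻¹) ^ p.1 * (lam⁻¹) ^ p.2)) :=
      (hg.mul_of_nonneg hg (fun k => by positivity) (fun k => by positivity)).mul_left lam⁻¹
    apply Summable.of_nonneg_of_le (fun p => ha0 _) (fun p => ?_) hb
    calc a (p.1 + p.2) ≤ (lam ^ (p.1 + p.2 + 1))⁻¹ := hbound _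
      _ = lam⁻¹ * ((lam⁻¹) ^ p.1 * (lam⁻¹) ^ p.2) := by
          rw [← inv_pow, pow_add, pow_add, pow_one]
          ring
  have h1 : ∑' n : ℕ, ∑' j : ℕ, a (n + j) = ∑' p : ℕ × ℕ, a (p.1 + p.2) :=
    (Summable.tsum_prod hprod).symm
  have hfun : (fun q : Σ k : ℕ, Fin (k+1) => a ((diagEquiv q).1 + (diagEquiv q).2))
      = fun q => a q.1 := by
    funext q
    obtain ⟨k, i⟩ := q
    have := i.isLt
    congr 1
    show (i : ℕ) + (k - i) = k
    omega
  have h2 : ∑' p : ℕ × ℕ, a (p.1 + p.2) = ∑' q : Σ k : ℕ, Fin (k+1), a q.1 := by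
    rw [← diagEquiv.tsum_eq (fun p : ℕ × ℕ => a (p.1 + p.2))]
    exact tsum_congr (fun q => congrFun hfun q)
  have hsig : Summable (fun q : Σ k : ℕ, Fin (k+1) => a q.1) := by
    have := (diagEquiv.summable_iff (f := fun p : ℕ × ℕ => a (p.1 + p.2))).mpr hprod
    apply this.congr
    intro q
    obtain ⟨k, i⟩ := q
    have := i.isLt
    show a _ = a _
    congr 1
    show (i : ℕ) + (k - i) = k
    omega
  rw [h1, h2, Summable.tsum_sigma hsig]
  apply tsum_congr
  intro k
  rw [tsum_fintype]
  simp [Finset.sum_const, Finset.card_univ, nsmul_eq_mul]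

end Series

section Decomp
open scoped ENNReal

variable {H : Sig → ℝ} {H0 H1 : ℕ → ℝ} {β lam : ℝ} {ν : Measure Sig}

lemma mem_cyl_replicate {b : Fin 2} {n : ℕ} {x : Sig} :
    x ∈ cyl (List.replicate n b) ↔ ∀ j, j < n → x j = b := by
  constructor
  · intro h j hj
    have := h j (by simpa using hj)
    rw [this, List.get_eq_getElem, List.getElem_replicate]
  · intro h i hi
    simp only [List.length_replicate] at hi
    rw [List.get_eq_getElem, List.getElem_replicate]
    exact h i hi

lemma mem_cyl_single {a : Fin 2} {x : Sig} : x ∈ cyl [a] ↔ x 0 = a := by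
  constructor
  · intro h; exact h 0 (by simp)
  · intro h i hi
    have h1 : i = 0 := by simp at hi; omega
    subst h1
    exact h

lemma mem_cyl_pair {a b : Fin 2} {x : Sig} : x ∈ cyl [a, b] ↔ x 0 = a ∧ x 1 = b := by
  constructor
  · intro h; exact ⟨h 0 (by simp), h 1 (by simp)⟩
  · rintro ⟨h0, h1⟩ i hi
    have h2 : i < 2 := by simpa using hi
    interval_cases i
    · exact h0
    · exact h1

lemma cyl_single_decomp (a b : Fin 2) (hab : a ≠ b) :
    cyl [a] = (⋃ k : ℕ, cyl (List.replicate (k+1) a ++ [b])) ∪ {fun _ => a} := by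
  ext x
  constructor
  · intro hx
    have hx0 : x 0 = a := mem_cyl_single.mp hx
    classical
    by_cases hall : ∀ i, x i = a
    · right
      exact funext hall
    · left
      push_neg at hall
      have hfind : ∃ i, x i ≠ a := hall
      set n := Nat.find hfind with hn
      have hnne : x n ≠ a := Nat.find_spec hfind
      have hnb : x n = b := fin2_ne2 hab hnne
      have hn1 : 1 ≤ n := by
        rcases Nat.eq_zero_or_pos n with h | h
        · exact absurd (h ▸ hx0) hnne
        · exact h
      have hlt : ∀ j, j < n → x j = a := by
        intro j hj
        by_contra hc
        exact absurd hj (not_lt.mpr (Nat.find_le hc))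
      refine Set.mem_iUnion.mpr ⟨n - 1, ?_⟩
      have hrw : n - 1 + 1 = n := by omega
      rw [hrw]
      exact mem_cyl_run.mpr ⟨hlt, hnb⟩
  · rintro (hx | hx)
    · obtain ⟨k, hk⟩ := Set.mem_iUnion.mp hx
      exact mem_cyl_single.mpr ((mem_cyl_run.mp hk).1 0 (by omega))
    · rw [Set.mem_singleton_iff] at hx
      subst hx
      exact mem_cyl_single.mpr rfl

lemma cyl_pair_decomp (a b : Fin 2) (hab : a ≠ b) :
    cyl [a, b] = (⋃ k : ℕ, cyl (a :: (List.replicate (k+1) b ++ [a]))) ∪ {cons2 a (fun _ => b)} := by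
  ext x
  constructor
  · intro hx
    obtain ⟨hx0, hx1⟩ := mem_cyl_pair.mp hx
    classical
    by_cases hall : ∀ i, x (i+1) = b
    · right
      rw [Set.mem_singleton_iff]
      funext i
      cases i with
      | zero => exact hx0
      | succ m => exact hall m
    · left
      push_neg at hall
      have hfind : ∃ i, x (i+1) ≠ b := hall
      set n := Nat.find hfind with hn
      have hnne : x (n+1) ≠ b := Nat.find_spec hfind
      have hnb : x (n+1) = a := fin2_ne1 hab hnne
      have hn1 : 1 ≤ n := by
        rcases Nat.eq_zero_or_pos n with h | h
        · exact absurd (h ▸ hx1) hnne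
        · exact h
      have hlt : ∀ j, 1 ≤ j → j ≤ n → x j = b := by
        intro j h1 h2
        obtain ⟨j', rfl⟩ : ∃ j', j = j' + 1 := ⟨j - 1, by omega⟩
        by_contra hc
        have hge : n ≤ j' := Nat.find_le hc
        omega
      refine Set.mem_iUnion.mpr ⟨n - 1, ?_⟩
      have hrw : n - 1 + 1 = n := by omega
      rw [hrw]
      exact mem_cyl_runWord.mpr ⟨hx0, hlt, hnb⟩
  · rintro (hx | hx)
    · obtain ⟨k, hk⟩ := Set.mem_iUnion.mp hx
      obtain ⟨h0, hb, _⟩ := mem_cyl_runWord.mp hk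
      exact mem_cyl_pair.mpr ⟨h0, hb 1 (by omega) (by omega)⟩
    · rw [Set.mem_singleton_iff] at hx
      subst hx
      exact mem_cyl_pair.mpr ⟨rfl, rfl⟩

lemma disj_runs (a b : Fin 2) (hab : a ≠ b) :
    Pairwise (Function.onFun Disjoint (fun k : ℕ => cyl (List.replicate (k+1) a ++ [b]))) := by
  intro k l hkl
  simp only [Function.onFun]
  rw [Set.disjoint_left]
  intro x hk hl
  obtain ⟨hka, hkb⟩ := mem_cyl_run.mp hk
  obtain ⟨hla, hlb⟩ := mem_cyl_run.mp hl
  rcases Nat.lt_or_gt_of_ne hkl with h | h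
  · exact hab (((hla (k+1) (by omega)).symm.trans hkb))
  · exact hab (((hka (l+1) (by omega)).symm.trans hlb))

lemma disj_runWords (a b : Fin 2) (hab : a ≠ b) :
    Pairwise (Function.onFun Disjoint
      (fun k : ℕ => cyl (a :: (List.replicate (k+1) b ++ [a])))) := by
  intro k l hkl
  simp only [Function.onFun]
  rw [Set.disjoint_left]
  intro x hk hl
  obtain ⟨-, hkb, hka⟩ := mem_cyl_runWord.mp hk
  obtain ⟨-, hlb, hla⟩ := mem_cyl_runWord.mp hl
  rcases Nat.lt_or_gt_of_ne hkl with h | h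
  · exact hab (hka.symm.trans (hlb (k+2) (by omega) (by omega)))
  · exact hab (hla.symm.trans (hkb (l+2) (by omega) (by omega)))

lemma rr_rep_le (hβ : 0 < β) (hR : ReducedDW H H0 H1) (hν : IsProbabilityMeasure ν)
    (hlam : 0 < lam)
    (hνL : ∀ f : Sig → ℝ, Continuous f → ∫ x, transfer β H f x ∂ν = lam * ∫ x, f x ∂ν)
    (a : Fin 2) : ∀ k : ℕ, (ν (cyl (List.replicate (k+1) a))).toReal ≤ (lam⁻¹) ^ k := by
  haveI := hν
  intro k
  induction k with
  | zero =>
    simp only [pow_zero]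
    have h := measure_mono (μ := ν) (Set.subset_univ (cyl (List.replicate 1 a)))
    rw [measure_univ] at h
    calc (ν (cyl (List.replicate 1 a))).toReal ≤ ENNReal.toReal 1 :=
          ENNReal.toReal_mono (by simp) h
      _ = 1 := by simp
  | succ m ih =>
    have hstep : (ν (cyl (a :: List.replicate (m+1) a))).toReal
        ≤ lam⁻¹ * (ν (cyl (List.replicate (m+1) a))).toReal :=
      rr_step_le hβ hR hν hlam hνL _ a
    have hrw : List.replicate (m+2) a = a :: List.replicate (m+1) a := rfl
    rw [hrw]
    calc (ν (cyl (a :: List.replicate (m+1) a))).toReal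
        ≤ lam⁻¹ * (ν (cyl (List.replicate (m+1) a))).toReal := hstep
      _ ≤ lam⁻¹ * (lam⁻¹) ^ m := by
          apply mul_le_mul_of_nonneg_left ih (by positivity)
      _ = (lam⁻¹) ^ (m+1) := by rw [pow_succ]; ring

lemma null_const_pt (hβ : 0 < β) (hR : ReducedDW H H0 H1) (hν : IsProbabilityMeasure ν)
    (hlam : 1 < lam)
    (hνL : ∀ f : Sig → ℝ, Continuous f → ∫ x, transfer β H f x ∂ν = lam * ∫ x, f x ∂ν)
    (a : Fin 2) : ν {fun _ => a} = 0 := by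
  haveI := hν
  have hlam0 : 0 < lam := lt_trans one_pos hlam
  have hb : ∀ k : ℕ, (ν {fun _ : ℕ => a}).toReal ≤ (lam⁻¹) ^ k := by
    intro k
    have hsub : {fun _ : ℕ => a} ⊆ cyl (List.replicate (k+1) a) := by
      intro x hx
      rw [Set.mem_singleton_iff] at hx
      subst hx
      exact mem_cyl_replicate.mpr (fun j _ => rfl)
    calc (ν {fun _ : ℕ => a}).toReal
        ≤ (ν (cyl (List.replicate (k+1) a))).toReal :=
          ENNReal.toReal_mono (measure_ne_top _ _) (measure_mono hsub)
      _ ≤ (lam⁻¹) ^ k := rr_rep_le hβ hR hν hlam0 hνL a k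
  have hlim : Filter.Tendsto (fun k : ℕ => (lam⁻¹) ^ k) Filter.atTop (nhds 0) := by
    apply tendsto_pow_atTop_nhds_zero_of_lt_one (by positivity)
    rw [inv_lt_one_iff₀]; right; exact hlam
  have hle : (ν {fun _ : ℕ => a}).toReal ≤ 0 :=
    ge_of_tendsto hlim (Filter.Eventually.of_forall hb)
  have h0 : (ν {fun _ : ℕ => a}).toReal = 0 :=
    le_antisymm hle ENNReal.toReal_nonneg
  rcases (ENNReal.toReal_eq_zero_iff _).mp h0 with h | h
  · exact h
  · exact absurd h (measure_ne_top _ _)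

lemma null_cons_pt (hβ : 0 < β) (hR : ReducedDW H H0 H1) (hν : IsProbabilityMeasure ν)
    (hlam : 1 < lam)
    (hνL : ∀ f : Sig → ℝ, Continuous f → ∫ x, transfer β H f x ∂ν = lam * ∫ x, f x ∂ν)
    (a b : Fin 2) : ν {cons2 a (fun _ => b)} = 0 := by
  haveI := hν
  have hlam0 : 0 < lam := lt_trans one_pos hlam
  have hb : ∀ k : ℕ, (ν {cons2 a (fun _ : ℕ => b)}).toReal ≤ lam⁻¹ * (lam⁻¹) ^ k := by
    intro k
    have hsub : {cons2 a (fun _ : ℕ => b)} ⊆ cyl (a :: List.replicate (k+1) b) := by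
      intro x hx
      rw [Set.mem_singleton_iff] at hx
      subst hx
      rw [mem_cyl_cons]
      exact ⟨rfl, mem_cyl_replicate.mpr (fun j _ => rfl)⟩
    calc (ν {cons2 a (fun _ : ℕ => b)}).toReal
        ≤ (ν (cyl (a :: List.replicate (k+1) b))).toReal :=
          ENNReal.toReal_mono (measure_ne_top _ _) (measure_mono hsub)
      _ ≤ lam⁻¹ * (ν (cyl (List.replicate (k+1) b))).toReal :=
          rr_step_le hβ hR hν hlam0 hνL _ a
      _ ≤ lam⁻¹ * (lam⁻¹) ^ k :=
          mul_le_mul_of_nonneg_left (rr_rep_le hβ hR hν hlam0 hνL b k) (by positivity)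
  have hlim : Filter.Tendsto (fun k : ℕ => lam⁻¹ * (lam⁻¹) ^ k) Filter.atTop (nhds 0) := by
    rw [show (0:ℝ) = lam⁻¹ * 0 by ring]
    apply Filter.Tendsto.const_mul
    apply tendsto_pow_atTop_nhds_zero_of_lt_one (by positivity)
    rw [inv_lt_one_iff₀]; right; exact hlam
  have hle : (ν {cons2 a (fun _ : ℕ => b)}).toReal ≤ 0 :=
    ge_of_tendsto hlim (Filter.Eventually.of_forall hb)
  have h0 : (ν {cons2 a (fun _ : ℕ => b)}).toReal = 0 :=
    le_antisymm hle ENNReal.toReal_nonneg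
  rcases (ENNReal.toReal_eq_zero_iff _).mp h0 with h | h
  · exact h
  · exact absurd h (measure_ne_top _ _)

/-- integral over a set decomposing into countably many measurable pieces plus a null point -/
lemma integral_decomp (hν : IsProbabilityMeasure ν) {g : Sig → ℝ} (hg : Continuous g)
    {S : Set Sig} (s : ℕ → Set Sig) (hm : ∀ k, MeasurableSet (s k))
    (hd : Pairwise (Function.onFun Disjoint s)) {pt : Sig} (hpt : ν {pt} = 0)
    (hdec : S = (⋃ k, s k) ∪ {pt}) :
    ∫ x in S, g x ∂ν = ∑' k, ∫ x in s k, g x ∂ν := by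
  haveI := hν
  have hae : S =ᵐ[ν] (⋃ k, s k) := by
    rw [MeasureTheory.ae_eq_set]
    constructor
    · apply measure_mono_null _ hpt
      rw [hdec]
      intro x hx
      simp only [Set.mem_diff, Set.mem_union] at hx
      rcases hx.1 with h | h
      · exact absurd h hx.2
      · exact h
    · apply measure_mono_null _ (MeasureTheory.measure_empty (μ := ν))
      rw [hdec]
      intro x hx
      simp only [Set.mem_diff, Set.mem_union] at hx
      exact absurd (Or.inl hx.1) hx.2
  rw [MeasureTheory.setIntegral_congr_set hae]
  exact MeasureTheory.integral_iUnion hm hd (cont_integrable hg).integrableOn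

end Decomp

section Asm

variable {H : Sig → ℝ} {H0 H1 : ℕ → ℝ} {β lam : ℝ} {ν : Measure Sig} {Φ : Sig → ℝ}

lemma lam_gt_one (hβ : 0 < β) (hR : ReducedDW H H0 H1) (hν : IsProbabilityMeasure ν)
    {M : ℝ} (hM : ∀ x, H x ≤ M)
    (hνL : ∀ f : Sig → ℝ, Continuous f → ∫ x, transfer β H f x ∂ν = lam * ∫ x, f x ∂ν) :
    1 + Real.exp (-β * M) ≤ lam := by
  haveI := hν
  have h := hνL (fun _ => 1) continuous_const
  rw [integral_const] at h
  simp only [measureReal_def, measure_univ, ENNReal.toReal_one, smul_eq_mul, mul_one] at h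
  have hpt : ∀ x : Sig, 1 + Real.exp (-β * M) ≤ transfer β H (fun _ => (1:ℝ)) x := by
    intro x
    unfold transfer
    simp only [mul_one]
    have hb0 : Real.exp (-β * M) ≤ Real.exp (-β * H (cons2 0 x)) := by
      apply Real.exp_le_exp.mpr
      have := hM (cons2 0 x); nlinarith
    have hb1 : Real.exp (-β * M) ≤ Real.exp (-β * H (cons2 1 x)) := by
      apply Real.exp_le_exp.mpr
      have := hM (cons2 1 x); nlinarith
    rcases fin2_cases (x 0) with h0 | h0
    · have hz : H (cons2 0 x) = 0 := Hzero hR (by simp [h0])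
      rw [hz]
      simp only [mul_zero, Real.exp_zero]
      linarith
    · have hz : H (cons2 1 x) = 0 := Hzero hR (by simp [h0])
      rw [hz]
      simp only [mul_zero, Real.exp_zero]
      linarith
  have hint : (1 : ℝ) + Real.exp (-β * M) ≤ ∫ x, transfer β H (fun _ => (1:ℝ)) x ∂ν := by
    have h2 := integral_mono (μ := ν) (cont_integrable continuous_const)
      (cont_integrable (transfer_continuous hR.cont continuous_const)) hpt
    rwa [integral_const, measureReal_def, measure_univ, ENNReal.toReal_one, one_smul] at h2
  linarith [hint.trans_eq h]

lemma phi_on_pair (hR : ReducedDW H H0 H1) (hΦc : Continuous Φ) (hΦpos : ∀ x, 0 < Φ x)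
    (hΦle : ∀ x, Φ x ≤ 1) (hlam0 : 0 < lam)
    (heig : ∀ x, transfer β H Φ x = lam * Φ x)
    (a b : Fin 2) (hab : a ≠ b) :
    ∀ x ∈ cyl [a, b], Φ x = Φ (wcat [a, b] zpt) := by
  intro x hx
  rw [eq_wcat_of_mem_cyl hx]
  exact phi_const hR hΦc hΦpos hΦle hlam0 heig [a, b] 0 (by simp) hab _ _

lemma run_get {a b : Fin 2} {n j : ℕ} (hn : 1 ≤ n) (hj : j < n + 1) :
    wcat (List.replicate n a ++ [b]) zpt j = if j < n then a else b := by
  have hlen : (List.replicate n a ++ [b]).length = n + 1 := by simp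
  have h1 : wcat (List.replicate n a ++ [b]) zpt j
      = (List.replicate n a ++ [b]).get ⟨j, by omega⟩ := by
    rw [wcat_apply]
    rw [dif_pos (show j < (List.replicate n a ++ [b]).length by omega)]
  rw [h1, getElem_rep_app hj]

lemma phi_on_run (hR : ReducedDW H H0 H1) (hΦc : Continuous Φ) (hΦpos : ∀ x, 0 < Φ x)
    (hΦle : ∀ x, Φ x ≤ 1) (hlam0 : 0 < lam)
    (heig : ∀ x, transfer β H Φ x = lam * Φ x)
    (a b : Fin 2) (hab : a ≠ b) (n : ℕ) (hn : 1 ≤ n) :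
    ∀ x ∈ cyl (List.replicate n a ++ [b]),
      Φ x = Φ (wcat (List.replicate n a ++ [b]) zpt) := by
  intro x hx
  rw [eq_wcat_of_mem_cyl hx]
  apply phi_const hR hΦc hΦpos hΦle hlam0 heig _ (n-1) (by simp; omega)
  rw [run_get hn (by omega), run_get hn (by omega)]
  have h1 : n - 1 < n := by omega
  have h2 : ¬ (n - 1 + 1 < n) := by omega
  rw [if_pos h1, if_neg h2]
  exact hab

lemma wcat_run_succ (a b : Fin 2) (n : ℕ) :
    wcat (List.replicate (n+1) a ++ [b]) zpt = cons2 a (wcat (List.replicate n a ++ [b]) zpt) := by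
  have h : List.replicate (n+1) a ++ [b] = a :: (List.replicate n a ++ [b]) := by
    simp [List.replicate_succ]
  rw [h]
  rfl

lemma d_rec (hR : ReducedDW H H0 H1) (hΦc : Continuous Φ) (hΦpos : ∀ x, 0 < Φ x)
    (hΦle : ∀ x, Φ x ≤ 1) (hlam0 : 0 < lam)
    (heig : ∀ x, transfer β H Φ x = lam * Φ x)
    (a b : Fin 2) (hab : a ≠ b) (Hb' : ℕ → ℝ)
    (hval : ∀ n, 1 ≤ n → ∀ x ∈ cyl (b :: (List.replicate n a ++ [b])), H x = Hb' n)
    (n : ℕ) (hn : 1 ≤ n) :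
    lam * Φ (wcat (List.replicate n a ++ [b]) zpt)
      = Φ (wcat (List.replicate (n+1) a ++ [b]) zpt)
        + Real.exp (-β * Hb' n) * Φ (wcat [b, a] zpt) := by
  set y := wcat (List.replicate n a ++ [b]) zpt with hy
  have hy0 : y 0 = a := by
    rw [hy, run_get hn (by omega), if_pos (by omega : 0 < n)]
  have hmem : y ∈ cyl (List.replicate n a ++ [b]) := wcat_mem_cyl _ _
  have heq := heig y
  unfold transfer at heq
  -- identify the two branches : one of cons2 a y, cons2 b y is cons2 0 y etc.
  have key : Real.exp (-β * H (cons2 a y)) * Φ (cons2 a y)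
      + Real.exp (-β * H (cons2 b y)) * Φ (cons2 b y) = lam * Φ y := by
    rcases fin2_cases a with ha | ha
    · have hb : b = 1 := fin2_eq_one_of_ne_zero (fun hc => hab (by rw [ha, hc]))
      rw [ha, hb]
      exact heq
    · have hb : b = 0 := fin2_eq_zero_of_ne_one (fun hc => hab (by rw [ha, hc]))
      rw [ha, hb]
      rw [← heq]
      ring
  have hHa : H (cons2 a y) = 0 := Hzero hR (by simp [hy0])
  have hca : cons2 a y = wcat (List.replicate (n+1) a ++ [b]) zpt := by
    rw [wcat_run_succ]
  have hHb : H (cons2 b y) = Hb' n := by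
    apply hval n hn
    exact cons2_mem_cyl_cons.mpr ⟨rfl, hmem⟩
  have hPb : Φ (cons2 b y) = Φ (wcat [b, a] zpt) := by
    apply phi_on_pair hR hΦc hΦpos hΦle hlam0 heig b a (Ne.symm hab)
    exact mem_cyl_pair.mpr ⟨rfl, by simp [hy0]⟩
  rw [hHa, hca, hHb, hPb] at key
  simp only [mul_zero, Real.exp_zero, one_mul] at key
  rw [← key]

/-- solution of the recurrence -/
lemma d_sol (hR : ReducedDW H H0 H1) (hΦc : Continuous Φ) (hΦpos : ∀ x, 0 < Φ x)
    (hΦle : ∀ x, Φ x ≤ 1) (hlam0 : 0 < lam)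
    (heig : ∀ x, transfer β H Φ x = lam * Φ x)
    (a b : Fin 2) (hab : a ≠ b) (Hb' : ℕ → ℝ)
    (hval : ∀ n, 1 ≤ n → ∀ x ∈ cyl (b :: (List.replicate n a ++ [b])), H x = Hb' n)
    (k : ℕ) :
    Φ (wcat [a, b] zpt)
      = Φ (wcat [b, a] zpt)
          * (∑ j ∈ Finset.range k, (lam ^ (j+1))⁻¹ * Real.exp (-β * Hb' (j+1)))
        + Φ (wcat (List.replicate (k+1) a ++ [b]) zpt) * (lam ^ k)⁻¹ := by
  have hl0 : lam ≠ 0 := ne_of_gt hlam0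
  induction k with
  | zero =>
    have h1 : List.replicate 1 a ++ [b] = [a, b] := by simp
    rw [h1]
    simp
  | succ m ih =>
    have hrec := d_rec hR hΦc hΦpos hΦle hlam0 heig a b hab Hb' hval (m+1) (by omega)
    have e1 : Φ (wcat (List.replicate (m+1) a ++ [b]) zpt) * (lam ^ m)⁻¹
        = (Φ (wcat (List.replicate (m+2) a ++ [b]) zpt)
            + Real.exp (-β * Hb' (m+1)) * Φ (wcat [b, a] zpt)) * (lam ^ (m+1))⁻¹ := by
      rw [← hrec, pow_succ]
      field_simp
    rw [ih, e1, Finset.sum_range_succ]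
    ring

lemma d_tail (hR : ReducedDW H H0 H1) (hΦc : Continuous Φ) (hΦpos : ∀ x, 0 < Φ x)
    (hΦle : ∀ x, Φ x ≤ 1) (hβ : 0 < β) (hlam1 : 1 < lam)
    (heig : ∀ x, transfer β H Φ x = lam * Φ x)
    (a b : Fin 2) (hab : a ≠ b) (Hb' : ℕ → ℝ) (hHb' : ∀ n, 1 ≤ n → 0 ≤ Hb' n)
    (hval : ∀ n, 1 ≤ n → ∀ x ∈ cyl (b :: (List.replicate n a ++ [b])), H x = Hb' n) :
    (Φ (wcat [a, b] zpt) = Φ (wcat [b, a] zpt) * Fser β Hb' lam) ∧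
    (∀ m : ℕ, Φ (wcat (List.replicate (m+1) a ++ [b]) zpt) * (lam ^ m)⁻¹
      = Φ (wcat [b, a] zpt)
          * ∑' j : ℕ, (lam ^ ((m+1) + j))⁻¹ * Real.exp (-β * Hb' ((m+1) + j))) := by
  have hlam0 : 0 < lam := lt_trans one_pos hlam1
  have hsol := d_sol hR hΦc hΦpos hΦle hlam0 heig a b hab Hb' hval
  have hsum := Fser_summable hlam1 hβ Hb' hHb'
  -- limit statement
  have hmain : Φ (wcat [a, b] zpt) = Φ (wcat [b, a] zpt) * Fser β Hb' lam := by
    have hS : Filter.Tendsto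
        (fun k => ∑ j ∈ Finset.range k, (lam ^ (j+1))⁻¹ * Real.exp (-β * Hb' (j+1)))
        Filter.atTop (nhds (Fser β Hb' lam)) := hsum.hasSum.tendsto_sum_nat
    have hlim0 : Filter.Tendsto
        (fun k => Φ (wcat (List.replicate (k+1) a ++ [b]) zpt) * (lam ^ k)⁻¹)
        Filter.atTop (nhds 0) := by
      apply squeeze_zero (fun k => ?_) (fun k => ?_)
        (tendsto_pow_atTop_nhds_zero_of_lt_one
          (by positivity : (0:ℝ) ≤ lam⁻¹)
          (by rw [inv_lt_one_iff₀]; right; exact hlam1))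
      · have := hΦpos (wcat (List.replicate (k+1) a ++ [b]) zpt)
        positivity
      · rw [inv_pow]
        have h1 := hΦle (wcat (List.replicate (k+1) a ++ [b]) zpt)
        have h2 : (0:ℝ) ≤ (lam ^ k)⁻¹ := by positivity
        calc Φ (wcat (List.replicate (k+1) a ++ [b]) zpt) * (lam ^ k)⁻¹
            ≤ 1 * (lam ^ k)⁻¹ := mul_le_mul_of_nonneg_right h1 h2
          _ = (lam ^ k)⁻¹ := one_mul _
    have hconv : Filter.Tendsto
        (fun k => Φ (wcat [b, a] zpt)
            * (∑ j ∈ Finset.range k, (lam ^ (j+1))⁻¹ * Real.exp (-β * Hb' (j+1)))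
          + Φ (wcat (List.replicate (k+1) a ++ [b]) zpt) * (lam ^ k)⁻¹)
        Filter.atTop (nhds (Φ (wcat [b, a] zpt) * Fser β Hb' lam + 0)) :=
      (Filter.Tendsto.const_mul _ hS).add hlim0
    have hfun : (fun k : ℕ => Φ (wcat [b, a] zpt)
            * (∑ j ∈ Finset.range k, (lam ^ (j+1))⁻¹ * Real.exp (-β * Hb' (j+1)))
          + Φ (wcat (List.replicate (k+1) a ++ [b]) zpt) * (lam ^ k)⁻¹)
        = fun _ => Φ (wcat [a, b] zpt) := funext fun k => (hsol k).symm
    rw [hfun] at hconv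
    have := tendsto_nhds_unique tendsto_const_nhds hconv
    rw [this]
    ring
  refine ⟨hmain, fun m => ?_⟩
  rw [tail_eq hlam1 hβ Hb' hHb' m]
  have := hsol m
  rw [hmain] at this
  linarith [this]

end Asm

section Asm2

variable {H : Sig → ℝ} {H0 H1 : ℕ → ℝ} {β lam : ℝ} {ν : Measure Sig} {Φ : Sig → ℝ}

lemma Ftser_summable (hlam : 1 < lam) (hβ : 0 < β) (Hs : ℕ → ℝ) (hHs : ∀ n, 1 ≤ n → 0 ≤ Hs n) :
    Summable (fun k : ℕ => ((k+1 : ℕ) : ℝ) * (lam ^ (k+1))⁻¹ * Real.exp (-β * Hs (k+1))) := by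
  have h0 : (0:ℝ) < lam := lt_trans one_pos hlam
  have hq0 : (0:ℝ) ≤ lam⁻¹ := by positivity
  have hq1 : lam⁻¹ < 1 := by rw [inv_lt_one_iff₀]; right; exact hlam
  have hg : Summable (fun k : ℕ => ((k:ℝ) ^ 1) * (lam⁻¹) ^ k) :=
    summable_pow_mul_geometric_of_norm_lt_one 1 (by rwa [Real.norm_eq_abs, abs_of_nonneg hq0])
  have hg2 : Summable (fun k : ℕ => (lam⁻¹) ^ k) := summable_geometric_of_lt_one hq0 hq1
  have hbig : Summable (fun k : ℕ => lam⁻¹ * (((k:ℝ) ^ 1) * (lam⁻¹) ^ k + (lam⁻¹) ^ k)) :=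
    ((hg.add hg2).mul_left _)
  apply Summable.of_nonneg_of_le (fun k => ?_) (fun k => ?_) hbig
  · positivity
  · have he : Real.exp (-β * Hs (k+1)) ≤ 1 := by
      rw [show (1:ℝ) = Real.exp 0 by simp]
      apply Real.exp_le_exp.mpr
      have := hHs (k+1) (by omega)
      nlinarith
    have h1 : ((k+1 : ℕ) : ℝ) * (lam ^ (k+1))⁻¹ * Real.exp (-β * Hs (k+1))
        ≤ ((k+1 : ℕ) : ℝ) * (lam ^ (k+1))⁻¹ * 1 := by
      apply mul_le_mul_of_nonneg_left he
      positivity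
    calc ((k+1 : ℕ) : ℝ) * (lam ^ (k+1))⁻¹ * Real.exp (-β * Hs (k+1))
        ≤ ((k+1 : ℕ) : ℝ) * (lam ^ (k+1))⁻¹ * 1 := h1
      _ = lam⁻¹ * (((k:ℝ) ^ 1) * (lam⁻¹) ^ k + (lam⁻¹) ^ k) := by
          rw [← inv_pow, pow_succ]
          push_cast
          ring

lemma Ftser_pos (hlam : 1 < lam) (hβ : 0 < β) (Hs : ℕ → ℝ) (hHs : ∀ n, 1 ≤ n → 0 ≤ Hs n) :
    0 < Ftser β Hs lam := by
  have h0 : (0:ℝ) < lam := lt_trans one_pos hlam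
  apply Summable.tsum_pos (Ftser_summable hlam hβ Hs hHs) (fun k => ?_) 0
  · positivity
  · norm_num
    positivity

lemma rr_int (hν : IsProbabilityMeasure ν) (s : Set Sig) :
    ∫ _x in s, (1:ℝ) ∂ν = (ν s).toReal := by
  haveI := hν
  rw [setIntegral_const, smul_eq_mul, mul_one, measureReal_def]

lemma ms_const (hν : IsProbabilityMeasure ν) {s : List (Fin 2)} {φv : ℝ}
    (hconst : ∀ x ∈ cyl s, Φ x = φv) :
    ∫ x in cyl s, Φ x ∂ν = φv * (ν (cyl s)).toReal := by
  haveI := hν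
  rw [setIntegral_congr_fun (measurableSet_cyl s) (fun x hx => hconst x hx),
    setIntegral_const, smul_eq_mul, mul_comm, measureReal_def]

lemma rr_rep_chain (hβ : 0 < β) (hR : ReducedDW H H0 H1) (hν : IsProbabilityMeasure ν)
    (hlam0 : 0 < lam)
    (hνL : ∀ f : Sig → ℝ, Continuous f → ∫ x, transfer β H f x ∂ν = lam * ∫ x, f x ∂ν)
    (a b : Fin 2) (hab : a ≠ b) :
    ∀ m : ℕ, (ν (cyl (List.replicate (m+1) a ++ [b]))).toReal
      = (lam ^ m)⁻¹ * (ν (cyl [a, b])).toReal := by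
  intro m
  induction m with
  | zero => simp
  | succ k ih =>
    have hword : List.replicate (k+2) a ++ [b] = a :: (List.replicate (k+1) a ++ [b]) := by
      simp [List.replicate_succ]
    have hconst : ∀ x ∈ cyl (List.replicate (k+1) a ++ [b]), H (cons2 a x) = 0 := by
      intro x hx
      apply Hzero hR
      have hx0 : x 0 = a := (mem_cyl_run.mp hx).1 0 (by omega)
      simp [hx0]
    have hstep := rr_step hR hν hlam0 hνL (List.replicate (k+1) a ++ [b]) a 0 hconst
    rw [hword, hstep, ih]
    simp only [mul_zero, Real.exp_zero]
    rw [pow_succ, mul_inv]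
    ring

lemma rr_word (hβ : 0 < β) (hR : ReducedDW H H0 H1) (hν : IsProbabilityMeasure ν)
    (hlam0 : 0 < lam)
    (hνL : ∀ f : Sig → ℝ, Continuous f → ∫ x, transfer β H f x ∂ν = lam * ∫ x, f x ∂ν)
    (a b : Fin 2) (hab : a ≠ b) (Hb' : ℕ → ℝ)
    (hval : ∀ n, 1 ≤ n → ∀ x ∈ cyl (b :: (List.replicate n a ++ [b])), H x = Hb' n)
    (n : ℕ) (hn : 1 ≤ n) :
    (ν (cyl (b :: (List.replicate n a ++ [b])))).toReal
      = lam⁻¹ * Real.exp (-β * Hb' n) * (ν (cyl (List.replicate n a ++ [b]))).toReal := by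
  apply rr_step hR hν hlam0 hνL
  intro x hx
  exact hval n hn _ (cons2_mem_cyl_cons.mpr ⟨rfl, hx⟩)

lemma rr_pair (hβ : 0 < β) (hR : ReducedDW H H0 H1) (hν : IsProbabilityMeasure ν)
    (hlam1 : 1 < lam)
    (hνL : ∀ f : Sig → ℝ, Continuous f → ∫ x, transfer β H f x ∂ν = lam * ∫ x, f x ∂ν)
    (a b : Fin 2) (hab : a ≠ b) (Hb' : ℕ → ℝ)
    (hval : ∀ n, 1 ≤ n → ∀ x ∈ cyl (b :: (List.replicate n a ++ [b])), H x = Hb' n) :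
    (ν (cyl [b, a])).toReal = Fser β Hb' lam * (ν (cyl [a, b])).toReal := by
  haveI := hν
  have hlam0 : 0 < lam := lt_trans one_pos hlam1
  have hdec := integral_decomp hν continuous_const
    (fun k => cyl (b :: (List.replicate (k+1) a ++ [b])))
    (fun k => measurableSet_cyl _) (disj_runWords b a (Ne.symm hab))
    (null_cons_pt hβ hR hν hlam1 hνL b a) (cyl_pair_decomp b a (Ne.symm hab))
    (g := fun _ => (1:ℝ))
  rw [rr_int hν] at hdec
  have hterm : ∀ k : ℕ, ∫ _x in cyl (b :: (List.replicate (k+1) a ++ [b])), (1:ℝ) ∂ν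
      = ((lam ^ (k+1))⁻¹ * Real.exp (-β * Hb' (k+1))) * (ν (cyl [a, b])).toReal := by
    intro k
    rw [rr_int hν, rr_word hβ hR hν hlam0 hνL a b hab Hb' hval (k+1) (by omega),
      rr_rep_chain hβ hR hν hlam0 hνL a b hab k]
    rw [pow_succ, mul_inv]
    ring
  rw [hdec, tsum_congr hterm, tsum_mul_right]
  rfl

lemma rr_pair_pos (hβ : 0 < β) (hR : ReducedDW H H0 H1) (hν : IsProbabilityMeasure ν)
    (hlam0 : 0 < lam) {M : ℝ} (hM : ∀ x, H x ≤ M)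
    (hνL : ∀ f : Sig → ℝ, Continuous f → ∫ x, transfer β H f x ∂ν = lam * ∫ x, f x ∂ν)
    (a b : Fin 2) :
    0 < (ν (cyl [a, b])).toReal := by
  haveI := hν
  have h1 : lam⁻¹ * Real.exp (-β * M) * (ν (cyl [b])).toReal ≤ (ν (cyl [a, b])).toReal :=
    rr_step_ge hβ hR hν hlam0 hM hνL [b] a
  have h2 : lam⁻¹ * Real.exp (-β * M) * (ν (cyl ([] : List (Fin 2)))).toReal
      ≤ (ν (cyl [b])).toReal :=
    rr_step_ge hβ hR hν hlam0 hM hνL [] b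
  have h3 : (ν (cyl ([] : List (Fin 2)))).toReal = 1 := by
    have : cyl ([] : List (Fin 2)) = Set.univ := Set.eq_univ_of_forall mem_cyl_nil
    rw [this, measure_univ, ENNReal.toReal_one]
  rw [h3, mul_one] at h2
  have hpos : 0 < lam⁻¹ * Real.exp (-β * M) := by positivity
  nlinarith

lemma ms_single (hβ : 0 < β) (hR : ReducedDW H H0 H1) (hν : IsProbabilityMeasure ν)
    (hlam1 : 1 < lam)
    (hνL : ∀ f : Sig → ℝ, Continuous f → ∫ x, transfer β H f x ∂ν = lam * ∫ x, f x ∂ν)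
    (hΦc : Continuous Φ) (hΦpos : ∀ x, 0 < Φ x) (hΦle : ∀ x, Φ x ≤ 1)
    (heig : ∀ x, transfer β H Φ x = lam * Φ x)
    (a b : Fin 2) (hab : a ≠ b) (Hb' : ℕ → ℝ) (hHb' : ∀ n, 1 ≤ n → 0 ≤ Hb' n)
    (hval : ∀ n, 1 ≤ n → ∀ x ∈ cyl (b :: (List.replicate n a ++ [b])), H x = Hb' n) :
    ∫ x in cyl [a], Φ x ∂ν
      = Φ (wcat [b, a] zpt) * Ftser β Hb' lam * (ν (cyl [a, b])).toReal := by
  haveI := hν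
  have hlam0 : 0 < lam := lt_trans one_pos hlam1
  have hdec := integral_decomp hν hΦc
    (fun k => cyl (List.replicate (k+1) a ++ [b]))
    (fun k => measurableSet_cyl _) (disj_runs a b hab)
    (null_const_pt hβ hR hν hlam1 hνL a) (cyl_single_decomp a b hab)
  have htail := (d_tail hR hΦc hΦpos hΦle hβ hlam1 heig a b hab Hb' hHb' hval).2
  have hterm : ∀ k : ℕ, ∫ x in cyl (List.replicate (k+1) a ++ [b]), Φ x ∂ν
      = (Φ (wcat [b, a] zpt) * (ν (cyl [a, b])).toReal)
          * ∑' j : ℕ, (lam ^ ((k+1) + j))⁻¹ * Real.exp (-β * Hb' ((k+1) + j)) := by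
    intro k
    rw [ms_const hν (phi_on_run hR hΦc hΦpos hΦle hlam0 heig a b hab (k+1) (by omega)),
      rr_rep_chain hβ hR hν hlam0 hνL a b hab k]
    have h1 := htail k
    calc Φ (wcat (List.replicate (k+1) a ++ [b]) zpt)
          * ((lam ^ k)⁻¹ * (ν (cyl [a, b])).toReal)
        = (Φ (wcat (List.replicate (k+1) a ++ [b]) zpt) * (lam ^ k)⁻¹)
            * (ν (cyl [a, b])).toReal := by ring
      _ = (Φ (wcat [b, a] zpt)
            * ∑' j : ℕ, (lam ^ ((k+1) + j))⁻¹ * Real.exp (-β * Hb' ((k+1) + j)))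
            * (ν (cyl [a, b])).toReal := by rw [h1]
      _ = (Φ (wcat [b, a] zpt) * (ν (cyl [a, b])).toReal)
            * ∑' j : ℕ, (lam ^ ((k+1) + j))⁻¹ * Real.exp (-β * Hb' ((k+1) + j)) := by ring
  rw [hdec, tsum_congr hterm, tsum_mul_left]
  -- now identify the double sum with Ftser
  have hre : ∀ k : ℕ, (∑' j : ℕ, (lam ^ ((k+1) + j))⁻¹ * Real.exp (-β * Hb' ((k+1) + j)))
      = ∑' j : ℕ, (lam ^ ((k+j)+1))⁻¹ * Real.exp (-β * Hb' ((k+j)+1)) := by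
    intro k
    apply tsum_congr
    intro j
    rw [show (k+1)+j = (k+j)+1 by omega]
  have hdsum := dsum (a := fun i => (lam ^ (i+1))⁻¹ * Real.exp (-β * Hb' (i+1))) hlam1
    (fun i => by positivity)
    (fun i => by
      have he : Real.exp (-β * Hb' (i+1)) ≤ 1 := by
        rw [show (1:ℝ) = Real.exp 0 by simp]
        apply Real.exp_le_exp.mpr
        have := hHb' (i+1) (by omega)
        nlinarith
      have h2 : (0:ℝ) ≤ (lam ^ (i+1))⁻¹ := by positivity
      nlinarith)
  have hft : ∑' k : ℕ, ((k:ℝ) + 1) * ((lam ^ (k+1))⁻¹ * Real.exp (-β * Hb' (k+1)))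
      = Ftser β Hb' lam := by
    apply tsum_congr
    intro k
    unfold Ftser at *
    push_cast
    ring
  rw [tsum_congr hre, hdsum, hft]
  ring

end Asm2


/-- explicit formulas for the Gibbs measure `μ_β` of a reduced double-well type
potential on the basic cylinders. -/
theorem stmt_13 (H : Sig → ℝ) (H0 H1 : ℕ → ℝ) (hR : ReducedDW H H0 H1)
    (β : ℝ) (hβ : 0 < β) (Φ : Sig → ℝ) (lam : ℝ) (ν μ : Measure Sig)
    (hG : GibbsData H β Φ lam ν μ) :
    (μ (cyl [0, 1])).toReal = (μ (cyl [1, 0])).toReal ∧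
    (∀ n : ℕ, 1 ≤ n →
      (μ (cyl (List.replicate n 0 ++ [1]))).toReal / (μ (cyl [0, 1])).toReal
        = (∑' j : ℕ, (lam ^ (n + j))⁻¹ * Real.exp (-β * H1 (n + j))) * Fser β H0 lam) ∧
    (μ (cyl [0])).toReal / (μ (cyl [0, 1])).toReal = Ftser β H1 lam / Fser β H1 lam ∧
    (∀ n : ℕ, 1 ≤ n →
      (μ (cyl (List.replicate n 1 ++ [0]))).toReal / (μ (cyl [1, 0])).toReal
        = (∑' j : ℕ, (lam ^ (n + j))⁻¹ * Real.exp (-β * H0 (n + j))) * Fser β H1 lam) ∧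
    (μ (cyl [1])).toReal / (μ (cyl [1, 0])).toReal = Ftser β H0 lam / Fser β H0 lam ∧
    (∀ n : ℕ, 1 ≤ n →
      (μ (cyl (0 :: (List.replicate n 1 ++ [0])))).toReal / (μ (cyl [1, 0])).toReal
        = Real.exp (-β * H0 n) * Fser β H1 lam / lam ^ n ∧
      (μ (cyl (1 :: (List.replicate n 0 ++ [1])))).toReal / (μ (cyl [0, 1])).toReal
        = Real.exp (-β * H1 n) * Fser β H0 lam / lam ^ n) ∧
    (μ (cyl [0])).toReal / (μ (cyl [1])).toReal
      = (Fser β H0 lam / Fser β H1 lam) * (Ftser β H1 lam / Ftser β H0 lam) := by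
  
  obtain ⟨hΦc, hΦpos, hΦmax, hlam0, heigf, hν, hνL, hμ⟩ := hG
  haveI := hν
  have heig : ∀ x, transfer β H Φ x = lam * Φ x := fun x => congrFun heigf x
  have hΦle : ∀ x, Φ x ≤ 1 := fun x => hΦmax.2 ⟨x, rfl⟩
  obtain ⟨xM, -, hxM'⟩ := isCompact_univ.exists_isMaxOn Set.univ_nonempty hR.cont.continuousOn
  have hM : ∀ x, H x ≤ H xM := fun x => hxM' (Set.mem_univ x)
  have hlam1 : 1 < lam := by
    have h := lam_gt_one hβ hR hν hM hνL
    have := Real.exp_pos (-β * H xM)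
    linarith
  have hH0 : ∀ n, 1 ≤ n → 0 ≤ H0 n := fun n hn => (hR.pos0 n hn).le
  have hH1 : ∀ n, 1 ≤ n → 0 ≤ H1 n := fun n hn => (hR.pos1 n hn).le
  have h01 : (0 : Fin 2) ≠ 1 := by decide
  have h10 : (1 : Fin 2) ≠ 0 := by decide
  -- eigenfunction constants
  obtain ⟨hc01F, htail0⟩ :=
    d_tail hR hΦc hΦpos hΦle hβ hlam1 heig 0 1 h01 H1 hH1 hR.val1
  obtain ⟨hc10F, htail1⟩ :=
    d_tail hR hΦc hΦpos hΦle hβ hlam1 heig 1 0 h10 H0 hH0 hR.val0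
  have hc01pos : 0 < Φ (wcat [0, 1] zpt) := hΦpos _
  have hc10pos : 0 < Φ (wcat [1, 0] zpt) := hΦpos _
  have hF0pos : 0 < Fser β H0 lam := Fser_pos hlam1 hβ H0 hH0
  have hF1pos : 0 < Fser β H1 lam := Fser_pos hlam1 hβ H1 hH1
  have hFt0pos : 0 < Ftser β H0 lam := Ftser_pos hlam1 hβ H0 hH0
  have hFt1pos : 0 < Ftser β H1 lam := Ftser_pos hlam1 hβ H1 hH1
  have hF01 : Fser β H0 lam * Fser β H1 lam = 1 := by
    have h := hc01F
    rw [hc10F] at h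
    have h2 : Φ (wcat [0,1] zpt) * 1 = Φ (wcat [0,1] zpt) * (Fser β H0 lam * Fser β H1 lam) := by
      rw [mul_one]
      nth_rewrite 1 [h]
      ring
    exact (mul_left_cancel₀ (ne_of_gt hc01pos) h2).symm
  -- nu cylinder facts
  have hrr10 : (ν (cyl [1, 0])).toReal = Fser β H1 lam * (ν (cyl [0, 1])).toReal :=
    rr_pair hβ hR hν hlam1 hνL 0 1 h01 H1 hR.val1
  have hrr01 : (ν (cyl [0, 1])).toReal = Fser β H0 lam * (ν (cyl [1, 0])).toReal :=
    rr_pair hβ hR hν hlam1 hνL 1 0 h10 H0 hR.val0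
  have hrr01pos : 0 < (ν (cyl [0, 1])).toReal := rr_pair_pos hβ hR hν hlam0 hM hνL 0 1
  have hrr10pos : 0 < (ν (cyl [1, 0])).toReal := rr_pair_pos hβ hR hν hlam0 hM hνL 1 0
  have hchain0 := rr_rep_chain hβ hR hν hlam0 hνL 0 1 h01
  have hchain1 := rr_rep_chain hβ hR hν hlam0 hνL 1 0 h10
  -- mu conversion
  obtain ⟨x₀, -, hx₀'⟩ := isCompact_univ.exists_isMinOn Set.univ_nonempty hΦc.continuousOn
  have hcle : ∀ x, Φ x₀ ≤ Φ x := fun x => hx₀' (Set.mem_univ x)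
  have hIpos : 0 < ∫ x, Φ x ∂ν := by
    have h := integral_mono (μ := ν) (cont_integrable continuous_const)
      (cont_integrable hΦc) hcle
    rw [integral_const, measureReal_def, measure_univ, ENNReal.toReal_one, one_smul] at h
    exact lt_of_lt_of_le (hΦpos x₀) h
  have hmu : ∀ w : List (Fin 2),
      (μ (cyl w)).toReal = (∫ x, Φ x ∂ν)⁻¹ * ∫ x in cyl w, Φ x ∂ν := by
    intro w
    rw [hμ, Measure.smul_apply, smul_eq_mul,
      MeasureTheory.withDensity_apply _ (measurableSet_cyl w)]
    have hlint : ∫⁻ x in cyl w, ENNReal.ofReal (Φ x) ∂ν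
        = ENNReal.ofReal (∫ x in cyl w, Φ x ∂ν) :=
      (MeasureTheory.ofReal_integral_eq_lintegral_ofReal
        (cont_integrable hΦc).integrableOn
        (Filter.Eventually.of_forall (fun x => (hΦpos x).le))).symm
    rw [hlint, ENNReal.toReal_mul, ENNReal.toReal_inv, ENNReal.toReal_ofReal hIpos.le,
      ENNReal.toReal_ofReal]
    exact setIntegral_nonneg (measurableSet_cyl w) (fun x _ => (hΦpos x).le)
  have hratio : ∀ u w : List (Fin 2),
      (μ (cyl u)).toReal / (μ (cyl w)).toReal
        = (∫ x in cyl u, Φ x ∂ν) / (∫ x in cyl w, Φ x ∂ν) := by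
    intro u w
    rw [hmu, hmu, mul_div_mul_left _ _ (inv_ne_zero (ne_of_gt hIpos))]
  -- Phi constants on pair cylinders
  have hphi01 := phi_on_pair hR hΦc hΦpos hΦle hlam0 heig 0 1 h01
  have hphi10 := phi_on_pair hR hΦc hΦpos hΦle hlam0 heig 1 0 h10
  have hms01 : ∫ x in cyl [0, 1], Φ x ∂ν
      = Φ (wcat [0, 1] zpt) * (ν (cyl [0, 1])).toReal := ms_const hν hphi01
  have hms10 : ∫ x in cyl [1, 0], Φ x ∂ν
      = Φ (wcat [1, 0] zpt) * (ν (cyl [1, 0])).toReal := ms_const hν hphi10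
  have hms0 := ms_single hβ hR hν hlam1 hνL hΦc hΦpos hΦle heig 0 1 h01 H1 hH1 hR.val1
  have hms1 := ms_single hβ hR hν hlam1 hνL hΦc hΦpos hΦle heig 1 0 h10 H0 hH0 hR.val0
  refine ⟨?_, ?_, ?_, ?_, ?_, ?_, ?_⟩
  · -- (1)
    rw [hmu [0,1], hmu [1,0], hms01, hms10, hrr10, hc01F]
    ring
  · -- (2)
    intro n hn
    obtain ⟨m, rfl⟩ : ∃ m, n = m + 1 := ⟨n - 1, by omega⟩
    rw [hratio]
    have hmsrun : ∫ x in cyl (List.replicate (m+1) 0 ++ [1]), Φ x ∂ν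
        = Φ (wcat (List.replicate (m+1) 0 ++ [1]) zpt)
            * (ν (cyl (List.replicate (m+1) 0 ++ [1]))).toReal :=
      ms_const hν (phi_on_run hR hΦc hΦpos hΦle hlam0 heig 0 1 h01 (m+1) (by omega))
    rw [hmsrun, hchain0 m, hms01]
    have hkey : Φ (wcat (List.replicate (m+1) 0 ++ [1]) zpt)
        * ((lam ^ m)⁻¹ * (ν (cyl [0, 1])).toReal)
        = (Φ (wcat [1, 0] zpt)
            * ∑' j : ℕ, (lam ^ ((m+1) + j))⁻¹ * Real.exp (-β * H1 ((m+1) + j)))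
          * (ν (cyl [0, 1])).toReal := by
      rw [← htail0 m]
      ring
    rw [hkey, mul_div_mul_right _ _ (ne_of_gt hrr01pos), hc01F]
    rw [div_eq_iff (by positivity)]
    linear_combination (-(Φ (wcat [1, 0] zpt)
      * ∑' j : ℕ, (lam ^ ((m+1) + j))⁻¹ * Real.exp (-β * H1 ((m+1) + j)))) * hF01
  · -- (2')
    rw [hratio, hms0, hms01, hc01F]
    rw [mul_div_mul_right _ _ (ne_of_gt hrr01pos)]
    rw [div_eq_div_iff (by positivity) (ne_of_gt hF1pos)]
    ring
  · -- (3)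
    intro n hn
    obtain ⟨m, rfl⟩ : ∃ m, n = m + 1 := ⟨n - 1, by omega⟩
    rw [hratio]
    have hmsrun : ∫ x in cyl (List.replicate (m+1) 1 ++ [0]), Φ x ∂ν
        = Φ (wcat (List.replicate (m+1) 1 ++ [0]) zpt)
            * (ν (cyl (List.replicate (m+1) 1 ++ [0]))).toReal :=
      ms_const hν (phi_on_run hR hΦc hΦpos hΦle hlam0 heig 1 0 h10 (m+1) (by omega))
    rw [hmsrun, hchain1 m, hms10]
    have hkey : Φ (wcat (List.replicate (m+1) 1 ++ [0]) zpt)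
        * ((lam ^ m)⁻¹ * (ν (cyl [1, 0])).toReal)
        = (Φ (wcat [0, 1] zpt)
            * ∑' j : ℕ, (lam ^ ((m+1) + j))⁻¹ * Real.exp (-β * H0 ((m+1) + j)))
          * (ν (cyl [1, 0])).toReal := by
      rw [← htail1 m]
      ring
    rw [hkey, mul_div_mul_right _ _ (ne_of_gt hrr10pos), hc10F]
    rw [div_eq_iff (by positivity)]
    linear_combination (-(Φ (wcat [0, 1] zpt)
      * ∑' j : ℕ, (lam ^ ((m+1) + j))⁻¹ * Real.exp (-β * H0 ((m+1) + j)))) * hF01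
  · -- (3')
    rw [hratio, hms1, hms10, hc10F]
    rw [mul_div_mul_right _ _ (ne_of_gt hrr10pos)]
    rw [div_eq_div_iff (by positivity) (ne_of_gt hF0pos)]
    ring
  · -- (4)
    intro n hn
    obtain ⟨m, rfl⟩ : ∃ m, n = m + 1 := ⟨n - 1, by omega⟩
    constructor
    · rw [hratio]
      have hphiword : ∀ x ∈ cyl (0 :: (List.replicate (m+1) 1 ++ [0])),
          Φ x = Φ (wcat [0, 1] zpt) := by
        intro x hx
        apply hphi01
        apply cyl_mono (u := [0, 1]) (v := List.replicate m 1 ++ [0])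
        have : ([0, 1] : List (Fin 2)) ++ (List.replicate m 1 ++ [0])
            = 0 :: (List.replicate (m+1) 1 ++ [0]) := by
          simp [List.replicate_succ]
        rwa [this]
      rw [ms_const hν hphiword, hms10]
      rw [rr_word hβ hR hν hlam0 hνL 1 0 h10 H0 hR.val0 (m+1) (by omega), hchain1 m]
      rw [hc01F, hrr10]
      rw [div_eq_div_iff (by positivity) (by positivity)]
      field_simp
      ring
    · rw [hratio]
      have hphiword : ∀ x ∈ cyl (1 :: (List.replicate (m+1) 0 ++ [1])),
          Φ x = Φ (wcat [1, 0] zpt) := by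
        intro x hx
        apply hphi10
        apply cyl_mono (u := [1, 0]) (v := List.replicate m 0 ++ [1])
        have : ([1, 0] : List (Fin 2)) ++ (List.replicate m 0 ++ [1])
            = 1 :: (List.replicate (m+1) 0 ++ [1]) := by
          simp [List.replicate_succ]
        rwa [this]
      rw [ms_const hν hphiword, hms01]
      rw [rr_word hβ hR hν hlam0 hνL 0 1 h01 H1 hR.val1 (m+1) (by omega), hchain0 m]
      rw [hc10F, hrr01]
      rw [div_eq_div_iff (by positivity) (by positivity)]
      field_simp
      ring
  · -- (5)
    rw [hratio, hms0, hms1, hrr10, hc01F]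
    have hrhs : Fser β H0 lam / Fser β H1 lam * (Ftser β H1 lam / Ftser β H0 lam)
        = (Fser β H0 lam * Ftser β H1 lam) / (Fser β H1 lam * Ftser β H0 lam) :=
      div_mul_div_comm _ _ _ _
    rw [hrhs, div_eq_div_iff (by positivity) (by positivity)]
    linear_combination (-(Φ (wcat [1,0] zpt) * Ftser β H1 lam * (ν (cyl [0,1])).toReal
      * Fser β H1 lam * Ftser β H0 lam)) * hF01
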